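/- arXiv:1411.1090 — 4 statements merged into one kernel-verified Lean document; each statement's English description precedes it below -/
import Mathlib

section
/- Let $k > 2$, $f(y) = y + |y|^{p-1}y$ with $p>1$, and let $y : (0,\infty) \to \mathbb{R}$ be a $C^2$ solution of $y'' + t^{-k} f(y) = 0$ on $(0,\infty)$. If $T > 0$ is a zero of $y$ (i.e., $y(T) = 0$) and $y$ is not identically zero near $T$, then for all $0 < t < T$ we have $|y(t)| < |y'(T)|\,(T - t)$. -/
open Real Set Filter Topology

lemma habs_lemma (w q : ℝ) : |w| ^ (2*q) = (w^2) ^ q := by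
  rw [Real.rpow_mul (abs_nonneg w)]
  congr 1
  rw [show (2:ℝ) = ((2:ℕ):ℝ) by norm_num, Real.rpow_natCast, sq_abs]

lemma auxF_hasDerivAt (p : ℝ) (hp : 1 < p) (z : ℝ) :
    HasDerivAt (fun z : ℝ => z^2/2 + |z|^(p+1)/(p+1)) (z + |z|^(p-1)*z) z := by
  have hp1 : (p:ℝ) + 1 ≠ 0 := by linarith
  have h3 : (fun w : ℝ => |w|^(p+1)) = fun w => (w^2)^((p+1)/2) := by
    funext w
    rw [← habs_lemma w ((p+1)/2)]
    congr 1
    ring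
  have h2 : HasDerivAt (fun w : ℝ => (w^2)^((p+1)/2)) ((p+1) * |z| ^ (p-1) * z) z := by
    have hd := (hasDerivAt_pow 2 z).rpow_const (p := (p+1)/2) (Or.inr (by linarith))
    convert hd using 1
    have e1 : (z^2 : ℝ)^((p+1)/2 - 1) = |z|^(p-1) := by
      rw [← habs_lemma z ((p+1)/2 - 1)]
      congr 1
      ring
    rw [e1]
    push_cast
    ring
  have h2' : HasDerivAt (fun w : ℝ => |w|^(p+1)) ((p+1)*|z|^(p-1)*z) z := by
    rw [h3]; exact h2
  have h4 : HasDerivAt (fun w : ℝ => |w|^(p+1)/(p+1)) (|z|^(p-1)*z) z := by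
    have : HasDerivAt (fun w : ℝ => |w|^(p+1)/(p+1)) ((p+1)*|z|^(p-1)*z/(p+1)) z :=
      h2'.div_const (p+1)
    convert this using 1
    rw [eq_div_iff hp1]
    ring
  have h5 : HasDerivAt (fun w : ℝ => w^2/2) z z := by
    have : HasDerivAt (fun w : ℝ => w^2/2) (((2:ℕ):ℝ) * z^(2-1)/2) z :=
      (hasDerivAt_pow 2 z).div_const 2
    convert this using 1
    push_cast
    ring
  exact h5.add h4

lemma auxF_nonneg (p : ℝ) (hp : 1 < p) (z : ℝ) : 0 ≤ z^2/2 + |z|^(p+1)/(p+1) := by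
  have h1 : (0:ℝ) ≤ z^2/2 := by positivity
  have h2 : (0:ℝ) ≤ |z|^(p+1)/(p+1) :=
    div_nonneg (Real.rpow_nonneg (abs_nonneg z) _) (by linarith)
  linarith

lemma auxF_eq_zero (p : ℝ) (hp : 1 < p) {z : ℝ} (h : z^2/2 + |z|^(p+1)/(p+1) ≤ 0) : z = 0 := by
  have h2 : (0:ℝ) ≤ |z|^(p+1)/(p+1) :=
    div_nonneg (Real.rpow_nonneg (abs_nonneg z) _) (by linarith)
  have h3 : z^2 ≤ 0 := by linarith
  nlinarith [sq_nonneg z]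

lemma auxF_lt (p : ℝ) (hp : 1 < p) {a b : ℝ} (h : |a| < |b|) :
    a^2/2 + |a|^(p+1)/(p+1) < b^2/2 + |b|^(p+1)/(p+1) := by
  have h1 : a^2 < b^2 := by
    rw [← sq_abs a, ← sq_abs b]
    exact pow_lt_pow_left₀ h (abs_nonneg a) two_ne_zero
  have h2 : |a|^(p+1) ≤ |b|^(p+1) :=
    Real.rpow_le_rpow (abs_nonneg a) h.le (by linarith)
  have h3 : |a|^(p+1)/(p+1) ≤ |b|^(p+1)/(p+1) := by
    gcongr
  linarith

theorem stmt1 (k p : ℝ) (hk : 2 < k) (hp : 1 < p) (y : ℝ → ℝ)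
    (hy : ContDiffOn ℝ 2 y (Set.Ioi 0))
    (hode : ∀ t ∈ Set.Ioi (0 : ℝ),
      deriv (deriv y) t + t ^ (-k) * (y t + |y t| ^ (p - 1) * y t) = 0)
    (T : ℝ) (hT : 0 < T) (hyT : y T = 0)
    (hnz : ¬ ∀ᶠ s in nhds T, y s = 0) :
    ∀ t, 0 < t → t < T → |y t| < |deriv y T| * (T - t) := by
  have hyO : IsOpen (Ioi (0:ℝ)) := isOpen_Ioi
  have hyd : DifferentiableOn ℝ y (Ioi 0) := hy.differentiableOn (by norm_num)
  have hy1 : ContDiffOn ℝ 1 (deriv y) (Ioi 0) := by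
    exact hy.deriv_of_isOpen hyO (by norm_num)
  have hyd' : DifferentiableOn ℝ (deriv y) (Ioi 0) := hy1.differentiableOn (by norm_num)
  have hyc : ContinuousOn y (Ioi 0) := hy.continuousOn
  have hy'c : ContinuousOn (deriv y) (Ioi 0) := hy1.continuousOn
  have hdy : ∀ s ∈ Ioi (0:ℝ), HasDerivAt y (deriv y s) s := fun s hs =>
    (hyd.differentiableAt (hyO.mem_nhds hs)).hasDerivAt
  have hdy' : ∀ s ∈ Ioi (0:ℝ), HasDerivAt (deriv y) (deriv (deriv y) s) s := fun s hs =>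
    (hyd'.differentiableAt (hyO.mem_nhds hs)).hasDerivAt
  have hode' : ∀ s ∈ Ioi (0:ℝ),
      deriv (deriv y) s = -(s ^ (-k) * (y s + |y s| ^ (p - 1) * y s)) := fun s hs => by
    have := hode s hs; linarith
  set F : ℝ → ℝ := fun z => z^2/2 + |z|^(p+1)/(p+1) with hFdef
  have hFc : Continuous F := by
    have : Differentiable ℝ F := fun z => (auxF_hasDerivAt p hp z).differentiableAt
    exact this.continuous
  set E2 : ℝ → ℝ := fun s => s^k * (deriv y s)^2/2 + F (y s) with hE2def
  set E : ℝ → ℝ := fun s => (deriv y s)^2/2 + s^(-k) * F (y s) with hEdef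
  -- derivative of E2
  have hE2d : ∀ s ∈ Ioi (0:ℝ), HasDerivAt E2 (k * s^(k-1) * (deriv y s)^2/2) s := by
    intro s hs
    have hs0 : (0:ℝ) < s := hs
    have h1 : HasDerivAt (fun s : ℝ => s ^ k) (k * s^(k-1)) s :=
      Real.hasDerivAt_rpow_const (Or.inl (ne_of_gt hs0))
    have h2 := hdy' s hs
    have h3 : HasDerivAt (fun s => (deriv y s)^2) (2 * deriv y s * deriv (deriv y) s) s := by
      have := h2.pow 2
      refine this.congr_deriv ?_
      push_cast
      ring
    have h4 : HasDerivAt (fun s => F (y s)) ((y s + |y s|^(p-1) * y s) * deriv y s) s :=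
      (auxF_hasDerivAt p hp (y s)).comp s (hdy s hs)
    have h5 : HasDerivAt (fun s : ℝ => s^k * (deriv y s)^2/2)
        ((k * s^(k-1) * (deriv y s)^2 + s^k * (2 * deriv y s * deriv (deriv y) s))/2) s :=
      (h1.mul h3).div_const 2
    have h6 := h5.add h4
    refine h6.congr_deriv ?_
    symm
    rw [hode' s hs]
    have hss : s^k * s^(-k) = 1 := by
      rw [← Real.rpow_add hs0]
      simp
    set dy := deriv y s
    set f := y s + |y s|^(p-1) * y s
    linear_combination (f * dy) * hss
  -- derivative of E
  have hEd : ∀ s ∈ Ioi (0:ℝ), HasDerivAt E (-k * s^(-k-1) * F (y s)) s := by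
    intro s hs
    have hs0 : (0:ℝ) < s := hs
    have h1 : HasDerivAt (fun s : ℝ => s ^ (-k)) (-k * s^(-k-1)) s :=
      Real.hasDerivAt_rpow_const (Or.inl (ne_of_gt hs0))
    have h2 := hdy' s hs
    have h3 : HasDerivAt (fun s => (deriv y s)^2/2) (2 * deriv y s * deriv (deriv y) s / 2) s := by
      have := (h2.pow 2).div_const 2
      refine this.congr_deriv ?_
      push_cast
      ring
    have h4 : HasDerivAt (fun s => F (y s)) ((y s + |y s|^(p-1) * y s) * deriv y s) s :=
      (auxF_hasDerivAt p hp (y s)).comp s (hdy s hs)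
    have h6 := h3.add (h1.mul h4)
    refine h6.congr_deriv ?_
    rw [hode' s hs]
    ring
  -- continuity of E2 and E on Ioi 0
  have hE2c : ContinuousOn E2 (Ioi 0) := by
    apply ContinuousOn.add
    · apply ContinuousOn.div_const
      apply ContinuousOn.mul
      · exact fun s hs => (Real.continuousAt_rpow_const s k (Or.inl (ne_of_gt hs))).continuousWithinAt
      · exact hy'c.pow 2
    · exact hFc.comp_continuousOn hyc
  have hEc : ContinuousOn E (Ioi 0) := by
    apply ContinuousOn.add
    · exact (hy'c.pow 2).div_const 2
    · apply ContinuousOn.mul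
      · exact fun s hs => (Real.continuousAt_rpow_const s (-k) (Or.inl (ne_of_gt hs))).continuousWithinAt
      · exact hFc.comp_continuousOn hyc
  -- monotonicity
  have hE2mono : MonotoneOn E2 (Ioi 0) := by
    apply monotoneOn_of_deriv_nonneg (convex_Ioi 0) hE2c
    · intro x hx
      rw [interior_Ioi] at hx
      exact (hE2d x hx).differentiableAt.differentiableWithinAt
    · intro x hx
      rw [interior_Ioi] at hx
      rw [(hE2d x hx).deriv]
      have : (0:ℝ) < x := hx
      positivity
  have hEanti : AntitoneOn E (Ioi 0) := by
    apply antitoneOn_of_deriv_nonpos (convex_Ioi 0) hEc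
    · intro x hx
      rw [interior_Ioi] at hx
      exact (hEd x hx).differentiableAt.differentiableWithinAt
    · intro x hx
      rw [interior_Ioi] at hx
      rw [(hEd x hx).deriv]
      have hx0 : (0:ℝ) < x := hx
      have h1 : (0:ℝ) ≤ x^(-k-1) := (Real.rpow_pos_of_pos hx0 _).le
      have h2 : 0 ≤ F (y x) := auxF_nonneg p hp (y x)
      have h3 : (0:ℝ) ≤ k * (x ^ (-k-1) * F (y x)) :=
        mul_nonneg (by linarith) (mul_nonneg h1 h2)
      nlinarith [h3]
  clear_value F E2 E
  -- T in Ioi 0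
  have hTmem : T ∈ Ioi (0:ℝ) := hT
  have hF0 : F 0 = 0 := by
    simp only [hFdef]
    rw [abs_zero, Real.zero_rpow (by linarith : p + 1 ≠ 0)]
    norm_num
  -- deriv y T ≠ 0
  have hc : deriv y T ≠ 0 := by
    intro h0
    apply hnz
    have hE2T : E2 T = 0 := by simp [hE2def, h0, hyT, hF0]
    have hET : E T = 0 := by simp [hEdef, h0, hyT, hF0]
    have hyz : ∀ s ∈ Ioi (0:ℝ), y s = 0 := by
      intro s hs
      rcases le_or_gt s T with hsT | hsT
      · have h1 : E2 s ≤ E2 T := hE2mono hs hTmem hsT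
        rw [hE2T] at h1
        have h2 : (0:ℝ) ≤ s^k * (deriv y s)^2/2 := by
          have : (0:ℝ) < s := hs
          positivity
        have h3 : F (y s) ≤ 0 := by
          simp only [hE2def] at h1
          linarith
        rw [hFdef] at h3
        exact auxF_eq_zero p hp h3
      · have h1 : E s ≤ E T := hEanti hTmem hs hsT.le
        rw [hET] at h1
        have hs0 : (0:ℝ) < s := lt_trans hT hsT
        have h2 : (0:ℝ) ≤ (deriv y s)^2/2 := by positivity
        have h4 : (0:ℝ) < s^(-k) := Real.rpow_pos_of_pos hs0 _
        have h5 : 0 ≤ F (y s) := by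
          simp only [hFdef]
          exact auxF_nonneg p hp (y s)
        have h3 : F (y s) ≤ 0 := by
          simp only [hEdef] at h1
          nlinarith
        rw [hFdef] at h3
        exact auxF_eq_zero p hp h3
    exact Filter.eventually_of_mem (hyO.mem_nhds hTmem) hyz
  have hcpos : 0 < |deriv y T| := abs_pos.mpr hc
  set c := |deriv y T| with hcdef
  -- Lemma H : last-hump tangent bound
  have hH : ∀ a, 0 < a → a < T → (∀ s, a ≤ s → s < T → y s ≠ 0) →
      ∀ s, a ≤ s → s < T → |y s| < c * (T - s) := by
    intro a ha haT hno
    have hya : y a ≠ 0 := hno a le_rfl haT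
    obtain ⟨σ, hσ1, hσa⟩ : ∃ σ : ℝ, (σ = 1 ∨ σ = -1) ∧ 0 < σ * y a := by
      rcases lt_or_gt_of_ne hya with h | h
      · exact ⟨-1, Or.inr rfl, by nlinarith⟩
      · exact ⟨1, Or.inl rfl, by linarith⟩
    have hσabs : |σ| = 1 := by rcases hσ1 with h | h <;> simp [h]
    have hσy : ∀ s, a ≤ s → s < T → 0 < σ * y s := by
      intro s hs1 hs2
      have hcont : ContinuousOn y (Icc a s) := hyc.mono (fun x hx => lt_of_lt_of_le ha hx.1)
      have hys := hno s hs1 hs2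
      rcases hσ1 with h | h
      · rw [h, one_mul]
        have hpa : 0 < y a := by rw [h, one_mul] at hσa; exact hσa
        by_contra hcon
        push_neg at hcon
        have h0' : y s < 0 := lt_of_le_of_ne hcon hys
        obtain ⟨z, hz, hz0⟩ := intermediate_value_Icc' hs1 hcont ⟨h0'.le, hpa.le⟩
        exact hno z hz.1 (lt_of_le_of_lt hz.2 hs2) hz0
      · rw [h] at hσa ⊢
        have hpa : y a < 0 := by nlinarith
        have hys' : y s < 0 := by
          by_contra hcon
          push_neg at hcon
          have h0' : 0 < y s := lt_of_le_of_ne hcon (Ne.symm hys)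
          obtain ⟨z, hz, hz0⟩ := intermediate_value_Icc hs1 hcont ⟨hpa.le, h0'.le⟩
          exact hno z hz.1 (lt_of_le_of_lt hz.2 hs2) hz0
        nlinarith
    have hyT' : σ * deriv y T = -c := by
      have hdT : HasDerivAt y (deriv y T) T := hdy T hTmem
      have hsl : Tendsto (fun s => σ * slope y T s) (𝓝[<] T) (𝓝 (σ * deriv y T)) :=
        ((hasDerivAt_iff_tendsto_slope.1 hdT).mono_left
          (nhdsWithin_mono T (fun x hx => ne_of_lt hx))).const_mul σ
      have hev : ∀ᶠ s in 𝓝[<] T, σ * slope y T s ≤ 0 := by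
        filter_upwards [Ioo_mem_nhdsLT_of_mem (⟨haT, le_rfl⟩ : T ∈ Ioc a T)] with s hs
        have h1 : 0 < σ * y s := hσy s hs.1.le hs.2
        have h2 : s - T < 0 := by linarith [hs.2]
        have heq : σ * slope y T s = (σ * y s) / (s - T) := by
          rw [slope_def_field, hyT]
          ring
        rw [heq]
        exact (div_neg_of_pos_of_neg h1 h2).le
      have hle : σ * deriv y T ≤ 0 := le_of_tendsto hsl hev
      have habs : |σ * deriv y T| = c := by rw [abs_mul, hσabs, one_mul]
      have h2 := abs_of_nonpos hle
      linarith
    have hgneg : ∀ s, a ≤ s → s < T → -c - σ * deriv y s < 0 := by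
      have hgc : ContinuousOn (fun s => -c - σ * deriv y s) (Icc a T) :=
        continuousOn_const.sub
          (continuousOn_const.mul (hy'c.mono (fun x hx => lt_of_lt_of_le ha hx.1)))
      have hgmono : StrictMonoOn (fun s => -c - σ * deriv y s) (Icc a T) := by
        apply strictMonoOn_of_deriv_pos (convex_Icc a T) hgc
        intro x hx
        rw [interior_Icc] at hx
        have hx0 : x ∈ Ioi (0:ℝ) := lt_trans ha hx.1
        have hdg : HasDerivAt (fun s => -c - σ * deriv y s) (-(σ * deriv (deriv y) x)) x := by
          have h1 : HasDerivAt (fun s => σ * deriv y s) (σ * deriv (deriv y) x) x :=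
            (hdy' x hx0).const_mul σ
          exact ((hasDerivAt_const x (-c)).sub h1).congr_deriv (by ring)
        rw [hdg.deriv, hode' x hx0]
        have h1 : 0 < σ * y x := hσy x hx.1.le hx.2
        have h2 : (0:ℝ) < x^(-k) := Real.rpow_pos_of_pos hx0 _
        have h3 : (0:ℝ) ≤ |y x|^(p-1) := Real.rpow_nonneg (abs_nonneg _) _
        have heq : -(σ * -(x ^ (-k) * (y x + |y x| ^ (p - 1) * y x)))
            = x ^ (-k) * ((σ * y x) * (1 + |y x| ^ (p - 1))) := by ring
        rw [heq]
        exact mul_pos h2 (mul_pos h1 (by linarith))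
      intro s h1 h2
      have h3 := hgmono ⟨h1, h2.le⟩ ⟨haT.le, le_rfl⟩ h2
      simp only at h3
      rw [hyT'] at h3
      linarith
    have hfanti : StrictAntiOn (fun s => c * (T - s) - σ * y s) (Icc a T) := by
      have hfc2 : ContinuousOn (fun s => c * (T - s) - σ * y s) (Icc a T) := by
        apply ContinuousOn.sub
        · exact continuousOn_const.mul (continuousOn_const.sub continuousOn_id)
        · exact continuousOn_const.mul (hyc.mono (fun x hx => lt_of_lt_of_le ha hx.1))
      apply strictAntiOn_of_deriv_neg (convex_Icc a T) hfc2
      intro x hx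
      rw [interior_Icc] at hx
      have hx0 : x ∈ Ioi (0:ℝ) := lt_trans ha hx.1
      have hd1 : HasDerivAt (fun s : ℝ => c * (T - s)) (-c) x := by
        have := ((hasDerivAt_id x).const_sub T).const_mul c
        refine this.congr_deriv ?_
        ring
      have hd2 : HasDerivAt (fun s => σ * y s) (σ * deriv y x) x := (hdy x hx0).const_mul σ
      have hdh : HasDerivAt (fun s => c * (T - s) - σ * y s) (-c - σ * deriv y x) x :=
        hd1.sub hd2
      rw [hdh.deriv]
      exact hgneg x hx.1.le hx.2
    intro s hs1 hs2
    have hpos := hσy s hs1 hs2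
    have hlt : σ * y s < c * (T - s) := by
      have h5 := hfanti ⟨hs1, hs2.le⟩ ⟨haT.le, le_rfl⟩ hs2
      simp only [hyT, mul_zero, sub_self] at h5
      linarith
    have habs2 : |y s| = σ * y s := by
      rcases hσ1 with h | h
      · rw [h, one_mul] at hpos ⊢
        exact abs_of_pos hpos
      · rw [h] at hpos ⊢
        rw [abs_of_neg (by linarith : y s < 0)]
        ring
    rw [habs2]
    exact hlt
  -- main argument
  intro t ht htT
  by_cases hyt : y t = 0
  · rw [hyt, abs_zero]
    exact mul_pos hcpos (by linarith)
  by_cases hz : ∃ s, t ≤ s ∧ s < T ∧ y s = 0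
  · -- find largest zero b₁, then Rolle point m, then energy comparison
    obtain ⟨s₀, hs₀t, hs₀T, hys₀⟩ := hz
    -- no zeros near T
    have hnear : ∃ a₀, a₀ < T ∧ ∀ s, s ∈ Ioo a₀ T → y s ≠ 0 := by
      have hdT : HasDerivAt y (deriv y T) T := hdy T hTmem
      have hsl : Tendsto (slope y T) (𝓝[<] T) (𝓝 (deriv y T)) :=
        (hasDerivAt_iff_tendsto_slope.1 hdT).mono_left
          (nhdsWithin_mono T (fun x hx => ne_of_lt hx))
      have hev : ∀ᶠ s in 𝓝[<] T, slope y T s ≠ 0 := hsl.eventually_ne hc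
      obtain ⟨a₀, ha₀, hsub⟩ := mem_nhdsLT_iff_exists_Ioo_subset.1 hev
      refine ⟨a₀, ha₀, fun s hs hy0 => hsub hs ?_⟩
      rw [slope_def_field, hy0, hyT]
      simp
    obtain ⟨a₀, ha₀T, hza₀⟩ := hnear
    have hs₀a₀ : s₀ ≤ a₀ := by
      by_contra hcon
      push_neg at hcon
      exact hza₀ s₀ ⟨hcon, hs₀T⟩ hys₀
    have hta₀ : t ≤ a₀ := le_trans hs₀t hs₀a₀
    set K : Set ℝ := Icc t a₀ ∩ y ⁻¹' {0} with hKdef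
    have hKsub : K ⊆ Icc t a₀ := inter_subset_left
    have hKclosed : IsClosed K := by
      apply ContinuousOn.preimage_isClosed_of_isClosed
      · exact hyc.mono (fun x hx => lt_of_lt_of_le ht hx.1)
      · exact isClosed_Icc
      · exact isClosed_singleton
    have hKcpt : IsCompact K := isCompact_Icc.of_isClosed_subset hKclosed hKsub
    have hKne : K.Nonempty := ⟨s₀, ⟨hs₀t, hs₀a₀⟩, hys₀⟩
    obtain ⟨b₁, hb₁K, hb₁max⟩ := hKcpt.exists_isGreatest hKne
    have hb₁t : t ≤ b₁ := hb₁K.1.1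
    have hb₁T : b₁ < T := lt_of_le_of_lt hb₁K.1.2 ha₀T
    have hb₁0 : (0:ℝ) < b₁ := lt_of_lt_of_le ht hb₁t
    have hyb₁ : y b₁ = 0 := hb₁K.2
    have hnozero : ∀ s, b₁ < s → s < T → y s ≠ 0 := by
      intro s h1 h2 h3
      rcases le_or_gt s a₀ with h4 | h4
      · have : s ∈ K := ⟨⟨le_trans hb₁t h1.le, h4⟩, h3⟩
        exact absurd (hb₁max this) (not_le.mpr h1)
      · exact hza₀ s ⟨h4, h2⟩ h3
    -- Rolle
    have hcont : ContinuousOn y (Icc b₁ T) :=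
      hyc.mono (fun x hx => lt_of_lt_of_le hb₁0 hx.1)
    obtain ⟨m, hm, hm'⟩ := exists_deriv_eq_zero hb₁T hcont (by rw [hyb₁, hyT])
    have hm0 : (0:ℝ) < m := lt_trans hb₁0 hm.1
    have htm : t < m := lt_of_le_of_lt hb₁t hm.1
    have hym : |y m| < c * (T - m) :=
      hH m hm0 hm.2 (fun s hs1 hs2 => hnozero s (lt_of_lt_of_le hm.1 hs1) hs2) m le_rfl hm.2
    -- energy comparison
    have h1 : E2 t ≤ E2 m := hE2mono ht hm0 htm.le
    have h2 : F (y t) ≤ E2 t := by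
      simp only [hE2def]
      have h2' : (0:ℝ) ≤ t^k * (deriv y t)^2/2 := by positivity
      linarith
    have h3 : E2 m = F (y m) := by
      simp [hE2def, hm']
    have h4 : |y t| ≤ |y m| := by
      by_contra hcon
      push_neg at hcon
      have := auxF_lt p hp hcon
      simp only [hFdef] at h1 h2 h3
      linarith
    have h5 : c * (T - m) < c * (T - t) := by
      apply mul_lt_mul_of_pos_left _ hcpos
      linarith
    linarith
  · push_neg at hz
    exact hH t ht htT hz t le_rfl htT
end

section
/- Let $N \ge 3$, $\nu = \frac{N-2}{2}$, $k = 2\frac{N-1}{N-2}$, and define $\alpha(t) := A_\nu \sqrt{t}\, J_\nu(2\nu t^{-1/(2\nu)})$ for $t > 0$, where $A_\nu = \nu^{-\nu}\Gamma(\nu+1)$ and $J_\nu$ is the Bessel function of the first kind of order $\nu$. Then $\alpha$ satisfies $\alpha''(t) + t^{-k}\alpha(t) = 0$ for all $t \in (0,\infty)$ and $\alpha(t) \to 1$ as $t \to +\infty$. -/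
open Real Set Filter

/-- The Bessel function of the first kind of order `ν`, defined by its power series. -/
noncomputable def besselJ (ν : ℝ) (s : ℝ) : ℝ :=
  ∑' j : ℕ, (-1 : ℝ) ^ j / (Real.Gamma ((j : ℝ) + 1) * Real.Gamma ((j : ℝ) + ν + 1)) *
    (s / 2) ^ (ν + 2 * (j : ℝ))

/-- The function `α(t) = A_ν √t J_ν(2ν t^{-1/(2ν)})` with `A_ν = ν^{-ν} Γ(ν+1)`,
`ν = (N-2)/2`. -/
noncomputable def alphaFun (N : ℕ) (t : ℝ) : ℝ :=
  (((N : ℝ) - 2) / 2) ^ (-(((N : ℝ) - 2) / 2)) * Real.Gamma (((N : ℝ) - 2) / 2 + 1) *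
    Real.sqrt t *
    besselJ (((N : ℝ) - 2) / 2) (2 * (((N : ℝ) - 2) / 2) * t ^ (-(1 / (2 * (((N : ℝ) - 2) / 2)))))

/-- Coefficients of the power series of `α` in `x = t^{-1/ν}`. -/
noncomputable def ccf (ν : ℝ) (j : ℕ) : ℝ :=
  (-1) ^ j * Real.Gamma (ν + 1) * ν ^ (2 * j) /
    ((j.factorial : ℝ) * Real.Gamma ((j : ℝ) + ν + 1))

/-- The series terms and their formal first and second derivatives. -/
noncomputable def ggf (ν : ℝ) (j : ℕ) (s : ℝ) : ℝ := ccf ν j * s ^ (-(j : ℝ) * ν⁻¹)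

noncomputable def ggf1 (ν : ℝ) (j : ℕ) (s : ℝ) : ℝ :=
  ccf ν j * (-(j : ℝ) * ν⁻¹ * s ^ (-(j : ℝ) * ν⁻¹ - 1))

noncomputable def ggf2 (ν : ℝ) (j : ℕ) (s : ℝ) : ℝ :=
  ccf ν j * (-(j : ℝ) * ν⁻¹) * ((-(j : ℝ) * ν⁻¹ - 1) * s ^ (-(j : ℝ) * ν⁻¹ - 2))

lemma gamma_fact_le (ν : ℝ) (hν : 0 < ν) (j : ℕ) :
    (j.factorial : ℝ) * Real.Gamma (ν + 1) ≤ Real.Gamma ((j : ℝ) + ν + 1) := by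
  have hG : 0 < Real.Gamma (ν + 1) := Real.Gamma_pos_of_pos (by linarith)
  induction j with
  | zero => simp
  | succ n ih =>
    have h1 : ((n : ℝ) + ν + 1) ≠ 0 := by positivity
    have h2 : Real.Gamma (((n + 1 : ℕ) : ℝ) + ν + 1)
        = ((n : ℝ) + ν + 1) * Real.Gamma ((n : ℝ) + ν + 1) := by
      push_cast
      rw [show (n : ℝ) + 1 + ν + 1 = ((n : ℝ) + ν + 1) + 1 by ring, Real.Gamma_add_one h1]
    rw [h2]
    have h3 : ((n + 1).factorial : ℝ) = ((n : ℝ) + 1) * n.factorial := by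
      push_cast [Nat.factorial_succ]; ring
    rw [h3]
    have h4 : (0 : ℝ) < n.factorial := by positivity
    calc ((n:ℝ) + 1) * n.factorial * Real.Gamma (ν + 1)
        ≤ ((n:ℝ) + ν + 1) * ((n.factorial : ℝ) * Real.Gamma (ν + 1)) := by
          nlinarith [mul_pos h4 hG]
      _ ≤ ((n:ℝ) + ν + 1) * Real.Gamma ((n : ℝ) + ν + 1) :=
          mul_le_mul_of_nonneg_left ih (by positivity)

lemma gamma_arg_pos (ν : ℝ) (hν : 0 < ν) (j : ℕ) : 0 < Real.Gamma ((j : ℝ) + ν + 1) :=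
  Real.Gamma_pos_of_pos (by positivity)

lemma ccf_abs_le (ν : ℝ) (hν : 0 < ν) (j : ℕ) :
    |ccf ν j| ≤ ν ^ (2 * j) / j.factorial := by
  have hG : 0 < Real.Gamma (ν + 1) := Real.Gamma_pos_of_pos (by linarith)
  have hG2 := gamma_arg_pos ν hν j
  have hf : (0 : ℝ) < j.factorial := by positivity
  have h1 : |ccf ν j| = Real.Gamma (ν + 1) * ν ^ (2 * j) /
      ((j.factorial : ℝ) * Real.Gamma ((j : ℝ) + ν + 1)) := by
    rw [ccf, abs_div, abs_mul, abs_mul, abs_pow, abs_neg, abs_one, one_pow, one_mul,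
      abs_of_pos hG, abs_pow, abs_of_pos hν, abs_mul, abs_of_pos hf, abs_of_pos hG2]
  rw [h1]
  rw [div_le_div_iff₀ (by positivity) hf]
  have key := gamma_fact_le ν hν j
  have hp : (0 : ℝ) ≤ ν ^ (2 * j) := by positivity
  have hf1 : (1 : ℝ) ≤ j.factorial := by exact_mod_cast j.factorial_pos
  nlinarith [mul_le_mul_of_nonneg_left key hp, mul_nonneg hp hG2.le]

lemma sq_le_four_pow (j : ℕ) : ((j : ℝ) + 1) ^ 2 ≤ 4 ^ j := by
  induction j with
  | zero => norm_num
  | succ n ih =>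
    have : ((n : ℝ) + 1 + 1) ^ 2 ≤ 4 * ((n : ℝ) + 1) ^ 2 := by nlinarith [n.cast_nonneg (α := ℝ)]
    push_cast
    calc ((n : ℝ) + 1 + 1) ^ 2 ≤ 4 * ((n : ℝ) + 1) ^ 2 := this
      _ ≤ 4 * 4 ^ n := by linarith
      _ = 4 ^ (n + 1) := by ring

lemma summable_master (y : ℝ) (hy : 0 ≤ y) :
    Summable (fun j : ℕ => ((j : ℝ) + 1) ^ 2 * y ^ j / j.factorial) := by
  refine Summable.of_nonneg_of_le (fun j => by positivity) (fun j => ?_)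
    (Real.summable_pow_div_factorial (4 * y))
  have h1 : ((j : ℝ) + 1) ^ 2 * y ^ j ≤ 4 ^ j * y ^ j :=
    mul_le_mul_of_nonneg_right (sq_le_four_pow j) (by positivity)
  rw [mul_pow]
  exact div_le_div_of_nonneg_right h1 (by positivity) |>.trans_eq rfl

lemma summable_key (ν : ℝ) (hν : 0 < ν) (x : ℝ) (hx : 0 ≤ x) :
    Summable (fun j : ℕ => |ccf ν j| * ((j : ℝ) + 1) ^ 2 * x ^ j) := by
  refine Summable.of_nonneg_of_le (fun j => by positivity) (fun j => ?_)
    (summable_master (ν ^ 2 * x) (by positivity))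
  have h1 := ccf_abs_le ν hν j
  have h2 : |ccf ν j| * ((j : ℝ) + 1) ^ 2 * x ^ j
      ≤ (ν ^ (2 * j) / j.factorial) * ((j : ℝ) + 1) ^ 2 * x ^ j := by
    have : (0:ℝ) ≤ ((j : ℝ) + 1) ^ 2 * x ^ j := by positivity
    calc |ccf ν j| * ((j : ℝ) + 1) ^ 2 * x ^ j
        = |ccf ν j| * (((j : ℝ) + 1) ^ 2 * x ^ j) := by ring
      _ ≤ (ν ^ (2 * j) / j.factorial) * (((j : ℝ) + 1) ^ 2 * x ^ j) :=
          mul_le_mul_of_nonneg_right h1 this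
      _ = (ν ^ (2 * j) / j.factorial) * ((j : ℝ) + 1) ^ 2 * x ^ j := by ring
  refine h2.trans_eq ?_
  rw [pow_mul, mul_pow]
  ring

/-- The defining coefficient recursion. -/
lemma ccf_rec (ν : ℝ) (hν : 0 < ν) (j : ℕ) :
    ccf ν (j + 1) * (-(((j : ℝ) + 1) * ν⁻¹)) * (-(((j : ℝ) + 1) * ν⁻¹) - 1) = - ccf ν j := by
  have hG : 0 < Real.Gamma ((j : ℝ) + ν + 1) := gamma_arg_pos ν hν j
  have h2 : Real.Gamma (((j + 1 : ℕ) : ℝ) + ν + 1)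
      = ((j : ℝ) + ν + 1) * Real.Gamma ((j : ℝ) + ν + 1) := by
    push_cast
    rw [show (j : ℝ) + 1 + ν + 1 = ((j : ℝ) + ν + 1) + 1 by ring,
      Real.Gamma_add_one (by positivity)]
  have h3 : (((j + 1).factorial : ℝ)) = ((j : ℝ) + 1) * j.factorial := by
    push_cast [Nat.factorial_succ]; ring
  have hf : (0 : ℝ) < j.factorial := by positivity
  rw [ccf, ccf, h2, h3]
  have hν' : ν ≠ 0 := hν.ne'
  have h4 : ((j : ℝ) + ν + 1) ≠ 0 := by positivity
  have h5 : ((j : ℝ) + 1) ≠ 0 := by positivity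
  field_simp
  rw [pow_succ, pow_mul, pow_mul]
  ring_nf

lemma alpha_series (ν : ℝ) (hν : 0 < ν) (N : ℕ) (hNν : ((N : ℝ) - 2) / 2 = ν)
    (t : ℝ) (ht : 0 < t) :
    alphaFun N t = ∑' j : ℕ, ggf ν j t := by
  simp only [ggf]
  rw [alphaFun, besselJ, hNν, ← tsum_mul_left]
  refine tsum_congr fun j => ?_
  have e1 : 2 * ν * t ^ (-(1 / (2 * ν))) / 2 = ν * t ^ (-(1 / (2 * ν))) := by ring
  rw [e1]
  have htp : (0 : ℝ) ≤ t ^ (-(1 / (2 * ν))) := (Real.rpow_pos_of_pos ht _).le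
  rw [Real.mul_rpow hν.le htp, ← Real.rpow_mul ht.le]
  have e4 : -(1 / (2 * ν)) * (ν + 2 * (j : ℝ)) = -(1/2) + -(j : ℝ) * ν⁻¹ := by
    field_simp; ring
  rw [e4, Real.rpow_add ht, Real.sqrt_eq_rpow, Real.Gamma_nat_eq_factorial, ccf]
  have e5 : ν ^ (-ν) * ν ^ (ν + 2 * (j : ℝ)) = ν ^ (2 * j) := by
    rw [← Real.rpow_add hν, show -ν + (ν + 2 * (j : ℝ)) = ((2 * j : ℕ) : ℝ) by push_cast; ring,
      Real.rpow_natCast]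
  have e6 : t ^ ((1 : ℝ)/2) * t ^ (-(1/2) : ℝ) = 1 := by
    rw [← Real.rpow_add ht]; norm_num
  linear_combination ((-1 : ℝ)) ^ j * Real.Gamma (ν + 1) /
      ((j.factorial : ℝ) * Real.Gamma ((j : ℝ) + ν + 1)) *
      (t ^ ((1:ℝ)/2) * t ^ (-(1/2) : ℝ) * t ^ (-(j:ℝ) * ν⁻¹)) * e5 +
    ((-1 : ℝ)) ^ j * Real.Gamma (ν + 1) * ν ^ (2 * j) /
      ((j.factorial : ℝ) * Real.Gamma ((j : ℝ) + ν + 1)) * t ^ (-(j:ℝ) * ν⁻¹) * e6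

/-- Rewrite an `rpow` with exponent `-(j) * e` as a `Monoid.pow`. -/
lemma rpow_neg_mul_nat (a e : ℝ) (ha : 0 < a) (j : ℕ) :
    a ^ (-(j : ℝ) * e) = (a ^ (-e)) ^ j := by
  rw [show -(j : ℝ) * e = -e * (j : ℝ) by ring, Real.rpow_mul ha.le, Real.rpow_natCast]

lemma hasDerivAt_ggf (ν : ℝ) (j : ℕ) {t : ℝ} (ht : t ≠ 0) :
    HasDerivAt (ggf ν j) (ggf1 ν j t) t := by
  have h := (Real.hasDerivAt_rpow_const (p := -(j : ℝ) * ν⁻¹) (Or.inl ht)).const_mul (ccf ν j)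
  unfold ggf ggf1
  exact h

lemma hasDerivAt_ggf1 (ν : ℝ) (j : ℕ) {t : ℝ} (ht : t ≠ 0) :
    HasDerivAt (ggf1 ν j) (ggf2 ν j t) t := by
  have h := (Real.hasDerivAt_rpow_const (p := -(j : ℝ) * ν⁻¹ - 1) (Or.inl ht)).const_mul
    (ccf ν j * (-(j : ℝ) * ν⁻¹))
  have e : -(j : ℝ) * ν⁻¹ - 1 - 1 = -(j : ℝ) * ν⁻¹ - 2 := by ring
  simp only [e] at h
  unfold ggf1 ggf2
  exact h.congr_of_eventuallyEq (Filter.Eventually.of_forall fun s => by beta_reduce; ring)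

/-- Norm bound for `ggf` on `[a, ∞)`. -/
lemma ggf_bound (ν : ℝ) (hν : 0 < ν) {a t : ℝ} (ha : 0 < a) (hat : a ≤ t) (j : ℕ) :
    ‖ggf ν j t‖ ≤ |ccf ν j| * ((j : ℝ) + 1) ^ 2 * (a ^ (-ν⁻¹)) ^ j := by
  have ht : 0 < t := lt_of_lt_of_le ha hat
  have h1 : ‖ggf ν j t‖ = |ccf ν j| * t ^ (-(j : ℝ) * ν⁻¹) := by
    rw [ggf, Real.norm_eq_abs, abs_mul, abs_of_pos (Real.rpow_pos_of_pos ht _)]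
  rw [h1, rpow_neg_mul_nat t ν⁻¹ ht j]
  have h2 : (t ^ (-ν⁻¹)) ^ j ≤ (a ^ (-ν⁻¹)) ^ j := by
    apply pow_le_pow_left₀ (Real.rpow_pos_of_pos ht _).le
    exact Real.rpow_le_rpow_of_nonpos ha hat (by positivity |> neg_nonpos_of_nonneg)
  have h3 : (1:ℝ) ≤ ((j:ℝ)+1)^2 := by nlinarith [j.cast_nonneg (α := ℝ)]
  calc |ccf ν j| * (t ^ (-ν⁻¹)) ^ j ≤ |ccf ν j| * (a ^ (-ν⁻¹)) ^ j :=
        mul_le_mul_of_nonneg_left h2 (abs_nonneg _)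
    _ ≤ |ccf ν j| * ((j : ℝ) + 1) ^ 2 * (a ^ (-ν⁻¹)) ^ j := by
        have hX := pow_nonneg (Real.rpow_pos_of_pos ha (-ν⁻¹)).le j
        nlinarith [mul_nonneg (mul_nonneg (abs_nonneg (ccf ν j)) hX)
          (by linarith : (0:ℝ) ≤ ((j:ℝ)+1)^2 - 1)]

lemma ggf1_bound (ν : ℝ) (hν : 0 < ν) {a t : ℝ} (ha : 0 < a) (hat : a ≤ t) (j : ℕ) :
    ‖ggf1 ν j t‖ ≤ |ccf ν j| * ((j : ℝ) + 1) ^ 2 * (ν⁻¹ * a ^ (-(1:ℝ))) * (a ^ (-ν⁻¹)) ^ j := by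
  have ht : 0 < t := lt_of_lt_of_le ha hat
  have h1 : ‖ggf1 ν j t‖ = |ccf ν j| * ((j : ℝ) * ν⁻¹) * t ^ (-(j : ℝ) * ν⁻¹ - 1) := by
    rw [ggf1, Real.norm_eq_abs, abs_mul, abs_mul, abs_mul,
      abs_of_pos (Real.rpow_pos_of_pos ht _), abs_neg, abs_of_nonneg (j.cast_nonneg (α := ℝ)),
      abs_of_pos (inv_pos.mpr hν)]
    ring
  rw [h1]
  have h2 : t ^ (-(j : ℝ) * ν⁻¹ - 1) ≤ a ^ (-(j : ℝ) * ν⁻¹ - 1) := by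
    apply Real.rpow_le_rpow_of_nonpos ha hat
    have : (0:ℝ) ≤ (j : ℝ) * ν⁻¹ := by positivity
    linarith
  have h3 : a ^ (-(j : ℝ) * ν⁻¹ - 1) = a ^ (-(1:ℝ)) * (a ^ (-ν⁻¹)) ^ j := by
    rw [show -(j : ℝ) * ν⁻¹ - 1 = -(j : ℝ) * ν⁻¹ + (-(1:ℝ)) by ring, Real.rpow_add ha,
      rpow_neg_mul_nat a ν⁻¹ ha j]; ring
  have h4 : (j : ℝ) * ν⁻¹ ≤ ((j : ℝ) + 1) ^ 2 * ν⁻¹ := by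
    have : (j:ℝ) ≤ ((j:ℝ)+1)^2 := by nlinarith [j.cast_nonneg (α := ℝ)]
    exact mul_le_mul_of_nonneg_right this (by positivity)
  have hb : (0:ℝ) ≤ a ^ (-(1:ℝ)) * (a ^ (-ν⁻¹)) ^ j := by positivity
  calc |ccf ν j| * ((j : ℝ) * ν⁻¹) * t ^ (-(j : ℝ) * ν⁻¹ - 1)
      ≤ |ccf ν j| * ((j : ℝ) * ν⁻¹) * (a ^ (-(1:ℝ)) * (a ^ (-ν⁻¹)) ^ j) := by
        rw [← h3]
        exact mul_le_mul_of_nonneg_left h2 (by positivity)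
    _ ≤ |ccf ν j| * (((j : ℝ) + 1) ^ 2 * ν⁻¹) * (a ^ (-(1:ℝ)) * (a ^ (-ν⁻¹)) ^ j) := by
        exact mul_le_mul_of_nonneg_right
          (mul_le_mul_of_nonneg_left h4 (abs_nonneg _)) hb
    _ = |ccf ν j| * ((j : ℝ) + 1) ^ 2 * (ν⁻¹ * a ^ (-(1:ℝ))) * (a ^ (-ν⁻¹)) ^ j := by ring

lemma ggf2_bound (ν : ℝ) (hν : 0 < ν) {a t : ℝ} (ha : 0 < a) (hat : a ≤ t) (j : ℕ) :
    ‖ggf2 ν j t‖ ≤ |ccf ν j| * ((j : ℝ) + 1) ^ 2 *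
      (ν⁻¹ * (ν⁻¹ + 1) * a ^ (-(2:ℝ))) * (a ^ (-ν⁻¹)) ^ j := by
  have ht : 0 < t := lt_of_lt_of_le ha hat
  have hje : (0:ℝ) ≤ (j : ℝ) * ν⁻¹ := by positivity
  have e1 : |(-(j:ℝ) * ν⁻¹)| = (j:ℝ) * ν⁻¹ := by
    rw [abs_mul, abs_neg, Nat.abs_cast, abs_of_pos (inv_pos.mpr hν)]
  have e2 : |(-(j:ℝ) * ν⁻¹ - 1)| = (j:ℝ) * ν⁻¹ + 1 := by
    rw [show -(j:ℝ) * ν⁻¹ - 1 = -((j:ℝ) * ν⁻¹ + 1) by ring, abs_neg,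
      abs_of_nonneg (by linarith : (0:ℝ) ≤ (j:ℝ) * ν⁻¹ + 1)]
  have h1 : ‖ggf2 ν j t‖ = |ccf ν j| * ((j : ℝ) * ν⁻¹) * ((j : ℝ) * ν⁻¹ + 1)
      * t ^ (-(j : ℝ) * ν⁻¹ - 2) := by
    rw [ggf2, Real.norm_eq_abs, abs_mul, abs_mul, abs_mul, abs_neg, Nat.abs_cast,
      abs_of_pos (inv_pos.mpr hν), abs_mul, e2, abs_of_pos (Real.rpow_pos_of_pos ht _)]
    ring
  rw [h1]
  have h2 : t ^ (-(j : ℝ) * ν⁻¹ - 2) ≤ a ^ (-(j : ℝ) * ν⁻¹ - 2) :=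
    Real.rpow_le_rpow_of_nonpos ha hat (by linarith)
  have h3 : a ^ (-(j : ℝ) * ν⁻¹ - 2) = a ^ (-(2:ℝ)) * (a ^ (-ν⁻¹)) ^ j := by
    rw [show -(j : ℝ) * ν⁻¹ - 2 = -(j : ℝ) * ν⁻¹ + (-(2:ℝ)) by ring, Real.rpow_add ha,
      rpow_neg_mul_nat a ν⁻¹ ha j]; ring
  have h4 : ((j : ℝ) * ν⁻¹) * ((j : ℝ) * ν⁻¹ + 1) ≤ ((j : ℝ) + 1) ^ 2 * (ν⁻¹ * (ν⁻¹ + 1)) := by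
    have hj : (0:ℝ) ≤ (j:ℝ) := j.cast_nonneg
    have hi : (0:ℝ) < ν⁻¹ := inv_pos.mpr hν
    nlinarith [sq_nonneg ((j:ℝ) * ν⁻¹), sq_nonneg ((j:ℝ) - 1), mul_nonneg hj hi.le]
  have hb : (0:ℝ) ≤ a ^ (-(2:ℝ)) * (a ^ (-ν⁻¹)) ^ j := by positivity
  calc |ccf ν j| * ((j : ℝ) * ν⁻¹) * ((j : ℝ) * ν⁻¹ + 1) * t ^ (-(j : ℝ) * ν⁻¹ - 2)
      ≤ |ccf ν j| * ((j : ℝ) * ν⁻¹) * ((j : ℝ) * ν⁻¹ + 1)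
          * (a ^ (-(2:ℝ)) * (a ^ (-ν⁻¹)) ^ j) := by
        rw [← h3]
        exact mul_le_mul_of_nonneg_left h2 (by positivity)
    _ ≤ |ccf ν j| * (((j : ℝ) + 1) ^ 2 * (ν⁻¹ * (ν⁻¹ + 1)))
          * (a ^ (-(2:ℝ)) * (a ^ (-ν⁻¹)) ^ j) := by
        refine mul_le_mul_of_nonneg_right ?_ hb
        rw [mul_assoc]
        exact mul_le_mul_of_nonneg_left h4 (abs_nonneg _)
    _ = |ccf ν j| * ((j : ℝ) + 1) ^ 2 * (ν⁻¹ * (ν⁻¹ + 1) * a ^ (-(2:ℝ)))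
          * (a ^ (-ν⁻¹)) ^ j := by ring

lemma summable_ggf (ν : ℝ) (hν : 0 < ν) {t : ℝ} (ht : 0 < t) :
    Summable (fun j => ggf ν j t) :=
  Summable.of_norm_bounded
    ((summable_key ν hν (t ^ (-ν⁻¹)) (Real.rpow_pos_of_pos ht _).le))
    (fun j => ggf_bound ν hν ht le_rfl j)

lemma summable_ggf1 (ν : ℝ) (hν : 0 < ν) {t : ℝ} (ht : 0 < t) :
    Summable (fun j => ggf1 ν j t) := by
  have h := ((summable_key ν hν (t ^ (-ν⁻¹)) (Real.rpow_pos_of_pos ht _).le).mul_left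
    (ν⁻¹ * t ^ (-(1:ℝ)))).congr (g := fun j => |ccf ν j| * ((j : ℝ) + 1) ^ 2 *
      (ν⁻¹ * t ^ (-(1:ℝ))) * (t ^ (-ν⁻¹)) ^ j) (fun j => by ring)
  exact Summable.of_norm_bounded h (fun j => ggf1_bound ν hν ht le_rfl j)

lemma summable_ggf2 (ν : ℝ) (hν : 0 < ν) {t : ℝ} (ht : 0 < t) :
    Summable (fun j => ggf2 ν j t) := by
  have h := ((summable_key ν hν (t ^ (-ν⁻¹)) (Real.rpow_pos_of_pos ht _).le).mul_left
    (ν⁻¹ * (ν⁻¹ + 1) * t ^ (-(2:ℝ)))).congr (g := fun j => |ccf ν j| * ((j : ℝ) + 1) ^ 2 *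
      (ν⁻¹ * (ν⁻¹ + 1) * t ^ (-(2:ℝ))) * (t ^ (-ν⁻¹)) ^ j) (fun j => by ring)
  exact Summable.of_norm_bounded h (fun j => ggf2_bound ν hν ht le_rfl j)

lemma hasDerivAt_sum_ggf (ν : ℝ) (hν : 0 < ν) {t : ℝ} (ht : 0 < t) :
    HasDerivAt (fun s => ∑' j, ggf ν j s) (∑' j, ggf1 ν j t) t := by
  have ha : 0 < t / 2 := by linarith
  have hx : (0:ℝ) ≤ (t/2) ^ (-ν⁻¹) := (Real.rpow_pos_of_pos ha _).le
  have hu : Summable (fun j => |ccf ν j| * ((j : ℝ) + 1) ^ 2 *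
      (ν⁻¹ * (t/2) ^ (-(1:ℝ))) * ((t/2) ^ (-ν⁻¹)) ^ j) :=
    ((summable_key ν hν _ hx).mul_left (ν⁻¹ * (t/2) ^ (-(1:ℝ)))).congr (fun j => by ring)
  have htmem : t ∈ Ioi (t/2) := by simp only [mem_Ioi]; linarith
  exact hasDerivAt_tsum_of_isPreconnected hu isOpen_Ioi (convex_Ioi (t/2)).isPreconnected
    (fun j y hy => hasDerivAt_ggf ν j (lt_trans ha hy).ne')
    (fun j y hy => ggf1_bound ν hν ha (le_of_lt hy) j)
    htmem (summable_ggf ν hν ht) htmem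

lemma hasDerivAt_sum_ggf1 (ν : ℝ) (hν : 0 < ν) {t : ℝ} (ht : 0 < t) :
    HasDerivAt (fun s => ∑' j, ggf1 ν j s) (∑' j, ggf2 ν j t) t := by
  have ha : 0 < t / 2 := by linarith
  have hx : (0:ℝ) ≤ (t/2) ^ (-ν⁻¹) := (Real.rpow_pos_of_pos ha _).le
  have hu : Summable (fun j => |ccf ν j| * ((j : ℝ) + 1) ^ 2 *
      (ν⁻¹ * (ν⁻¹ + 1) * (t/2) ^ (-(2:ℝ))) * ((t/2) ^ (-ν⁻¹)) ^ j) :=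
    ((summable_key ν hν _ hx).mul_left (ν⁻¹ * (ν⁻¹ + 1) * (t/2) ^ (-(2:ℝ)))).congr
      (fun j => by ring)
  have htmem : t ∈ Ioi (t/2) := by simp only [mem_Ioi]; linarith
  exact hasDerivAt_tsum_of_isPreconnected hu isOpen_Ioi (convex_Ioi (t/2)).isPreconnected
    (fun j y hy => hasDerivAt_ggf1 ν j (lt_trans ha hy).ne')
    (fun j y hy => ggf2_bound ν hν ha (le_of_lt hy) j)
    htmem (summable_ggf1 ν hν ht) htmem

theorem stmt2 (N : ℕ) (hN : 3 ≤ N) (k : ℝ) (hk : k = 2 * ((N : ℝ) - 1) / ((N : ℝ) - 2)) :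
    (∀ t ∈ Set.Ioi (0 : ℝ),
      deriv (deriv (alphaFun N)) t + t ^ (-k) * alphaFun N t = 0) ∧
    Filter.Tendsto (alphaFun N) Filter.atTop (nhds 1) := by
  have hN3 : (3:ℝ) ≤ (N:ℝ) := by exact_mod_cast hN
  obtain ⟨ν, hνdef⟩ : ∃ ν : ℝ, ν = ((N:ℝ) - 2) / 2 := ⟨_, rfl⟩
  have hν : 0 < ν := by rw [hνdef]; linarith
  have hNν : ((N:ℝ) - 2) / 2 = ν := hνdef.symm
  have hN2 : (N:ℝ) - 2 ≠ 0 := by linarith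
  have hkk : k = ν⁻¹ + 2 := by rw [hk, hνdef]; field_simp; ring
  have hS : ∀ t ∈ Ioi (0:ℝ), alphaFun N t = ∑' j, ggf ν j t :=
    fun t ht => alpha_series ν hν N hNν t ht
  have hS1 : ∀ t ∈ Ioi (0:ℝ), deriv (alphaFun N) t = ∑' j, ggf1 ν j t := by
    intro t ht
    have heq : alphaFun N =ᶠ[nhds t] (fun s => ∑' j, ggf ν j s) :=
      eventually_of_mem (isOpen_Ioi.mem_nhds ht) hS
    rw [heq.deriv_eq, (hasDerivAt_sum_ggf ν hν ht).deriv]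
  have hS2 : ∀ t ∈ Ioi (0:ℝ), deriv (deriv (alphaFun N)) t = ∑' j, ggf2 ν j t := by
    intro t ht
    have heq : deriv (alphaFun N) =ᶠ[nhds t] (fun s => ∑' j, ggf1 ν j s) :=
      eventually_of_mem (isOpen_Ioi.mem_nhds ht) hS1
    rw [heq.deriv_eq, (hasDerivAt_sum_ggf1 ν hν ht).deriv]
  have hG1 : Real.Gamma (ν + 1) ≠ 0 := (Real.Gamma_pos_of_pos (by linarith)).ne'
  have hc1 : ccf ν 0 = 1 := by
    rw [ccf]
    simp only [pow_zero, one_mul, mul_zero, Nat.factorial_zero, Nat.cast_zero,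
      Nat.cast_one, zero_add]
    field_simp
  constructor
  · intro t ht
    have ht' : (0:ℝ) < t := ht
    rw [hS2 t ht, hS t ht]
    have h0 : ggf2 ν 0 t = 0 := by simp [ggf2]
    rw [Summable.tsum_eq_zero_add (summable_ggf2 ν hν ht'), h0, zero_add]
    have hterm : ∀ j : ℕ, ggf2 ν (j+1) t = -(t ^ (-k) * ggf ν j t) := by
      intro j
      have hx : t ^ (-((j:ℝ)+1) * ν⁻¹ - 2) = t ^ (-k) * t ^ (-(j:ℝ) * ν⁻¹) := by
        rw [← Real.rpow_add ht']
        congr 1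
        rw [hkk]; ring
      have hcast : ((j+1 : ℕ) : ℝ) = (j:ℝ) + 1 := by push_cast; ring
      rw [ggf2, ggf, hcast, hx]
      linear_combination (t ^ (-k) * t ^ (-(j:ℝ) * ν⁻¹)) * ccf_rec ν hν j
    calc (∑' j, ggf2 ν (j+1) t) + t ^ (-k) * ∑' j, ggf ν j t
        = (∑' j, -(t ^ (-k) * ggf ν j t)) + t ^ (-k) * ∑' j, ggf ν j t := by
          rw [tsum_congr hterm]
      _ = 0 := by rw [tsum_neg, tsum_mul_left]; ring
  · -- the limit
    have habs : Summable (fun j => |ccf ν j|) := by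
      refine Summable.of_nonneg_of_le (fun j => abs_nonneg _) (fun j => ?_)
        (summable_key ν hν 1 zero_le_one)
      have h3 : (1:ℝ) ≤ ((j:ℝ)+1)^2 := by nlinarith [j.cast_nonneg (α := ℝ)]
      rw [one_pow, mul_one]
      nlinarith [mul_nonneg (abs_nonneg (ccf ν j)) (by linarith : (0:ℝ) ≤ ((j:ℝ)+1)^2 - 1)]
    have hCsum : Summable (fun j => |ccf ν (j+1)|) := ((summable_nat_add_iff (f := fun j => |ccf ν j|) 1).mpr habs :)
    set C := ∑' j, |ccf ν (j+1)| with hCdef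
    have key : ∀ t : ℝ, 1 ≤ t → ‖alphaFun N t - 1‖ ≤ C * t ^ (-ν⁻¹) := by
      intro t ht1
      have ht : (0:ℝ) < t := by linarith
      have hsg : Summable (fun j => ggf ν j t) := summable_ggf ν hν ht
      have e0 : ggf ν 0 t = 1 := by simp [ggf, hc1]
      have hsplit : alphaFun N t = 1 + ∑' j, ggf ν (j+1) t := by
        rw [hS t ht, Summable.tsum_eq_zero_add hsg, e0]
      rw [hsplit, add_sub_cancel_left]
      have hb : ∀ j : ℕ, ‖ggf ν (j+1) t‖ ≤ |ccf ν (j+1)| * t ^ (-ν⁻¹) := by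
        intro j
        have h1 : ‖ggf ν (j+1) t‖ = |ccf ν (j+1)| * t ^ (-((j+1:ℕ):ℝ) * ν⁻¹) := by
          rw [ggf, Real.norm_eq_abs, abs_mul, abs_of_pos (Real.rpow_pos_of_pos ht _)]
        rw [h1]
        refine mul_le_mul_of_nonneg_left ?_ (abs_nonneg _)
        apply Real.rpow_le_rpow_of_exponent_le ht1
        have hj1 : (1:ℝ) ≤ ((j+1:ℕ):ℝ) := by exact_mod_cast Nat.one_le_iff_ne_zero.mpr (Nat.succ_ne_zero j)
        have hi : (0:ℝ) < ν⁻¹ := inv_pos.mpr hν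
        nlinarith
      have hbs : Summable (fun j => |ccf ν (j+1)| * t ^ (-ν⁻¹)) := hCsum.mul_right _
      have hns : Summable (fun j => ‖ggf ν (j+1) t‖) :=
        Summable.of_nonneg_of_le (fun j => norm_nonneg _) hb hbs
      calc ‖∑' j, ggf ν (j+1) t‖ ≤ ∑' j, ‖ggf ν (j+1) t‖ := norm_tsum_le_tsum_norm hns
        _ ≤ ∑' j, |ccf ν (j+1)| * t ^ (-ν⁻¹) := Summable.tsum_le_tsum hb hns hbs
        _ = C * t ^ (-ν⁻¹) := by rw [tsum_mul_right]
    have hlim : Tendsto (fun t => alphaFun N t - 1) atTop (nhds 0) := by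
      apply squeeze_zero_norm' (a := fun t => C * t ^ (-ν⁻¹))
      · filter_upwards [eventually_ge_atTop (1:ℝ)] with t ht using key t ht
      · have h := (tendsto_rpow_neg_atTop (inv_pos.mpr hν)).const_mul C
        simpa using h
    exact tendsto_sub_nhds_zero_iff.mp hlim
end

section
/- Let $N \ge 3$, $\nu = \frac{N-2}{2}$, and let $\alpha(t) = A_\nu\sqrt{t}\,J_\nu(2\nu t^{-1/(2\nu)})$ with $A_\nu = \nu^{-\nu}\Gamma(\nu+1)$. If $\tau > 0$ is a zero of $\alpha$, then the radial function $\varphi(x) := \alpha(\tau |x|^{-(N-2)})$ defined on the unit ball $B_1 \subset \mathbb{R}^N$ satisfies $-\Delta \varphi = \mu \varphi$ in $B_1 \setminus \{0\}$ with $\mu = (N-2)^2 \tau^{-2/(N-2)}$, and $\varphi = 0$ on $\partial B_1$. -/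
open Real Set Filter Metric Topology

/-- The Laplacian of `f : ℝ^N → ℝ`, as the sum of the second derivatives along the
coordinate directions. -/
noncomputable def lap {N : ℕ} (f : EuclideanSpace ℝ (Fin N) → ℝ)
    (x : EuclideanSpace ℝ (Fin N)) : ℝ :=
  ∑ i : Fin N, iteratedDeriv 2 (fun s : ℝ => f (x + s • EuclideanSpace.single i 1)) 0

lemma ratio_summable {f : ℕ → ℝ} (M : ℝ)
    (h : ∀ j : ℕ, |f (j + 1)| ≤ M / ((j : ℝ) + 1) * |f j|) : Summable f := by
  obtain ⟨n₀, hn₀⟩ := exists_nat_ge (2 * M)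
  refine summable_of_ratio_norm_eventually_le (r := 1/2) (by norm_num) ?_
  filter_upwards [eventually_ge_atTop n₀] with j hj
  have hj1 : 2 * M ≤ (j : ℝ) + 1 := le_trans hn₀ (by exact_mod_cast le_trans hj (Nat.le_succ j))
  have h2 : M / ((j : ℝ) + 1) ≤ 1 / 2 := by
    rw [div_le_div_iff₀ (by positivity) (by norm_num)]
    linarith
  calc ‖f (j + 1)‖ ≤ M / ((j : ℝ) + 1) * ‖f j‖ := h j
    _ ≤ 1 / 2 * ‖f j‖ := mul_le_mul_of_nonneg_right h2 (norm_nonneg _)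

lemma sdom_summable {ν μ : ℝ} (hν : 0 < ν) (hμ : 0 < μ) {a : ℕ → ℝ}
    (habs : ∀ j : ℕ, |a (j + 1)| = μ / (4 * ((j : ℝ) + 1) * ((j : ℝ) + ν + 1)) * |a j|)
    (R : ℝ) (hR : 1 ≤ R) :
    Summable fun j : ℕ => ((j : ℝ) + 1) ^ 2 * ((j : ℝ) + 2) ^ 2 * |a j| * R ^ j := by
  have hR0 : (0 : ℝ) < R := by linarith
  apply ratio_summable (M := 9 * μ * R / 4)
  intro j
  have hd : (0 : ℝ) < 4 * ((j : ℝ) + 1) * ((j : ℝ) + ν + 1) := by positivity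
  have habs' : ∀ (c : ℝ) (k : ℕ), 0 ≤ c → |c * |a k| * R ^ k| = c * |a k| * R ^ k :=
    fun c k hc => abs_of_nonneg (by positivity)
  rw [habs' _ _ (by positivity), habs' _ _ (by positivity)]
  push_cast
  rw [habs j, pow_succ]
  have hcoef : ((j : ℝ) + 1 + 1) ^ 2 * ((j : ℝ) + 1 + 2) ^ 2 *
      (μ / (4 * ((j : ℝ) + 1) * ((j : ℝ) + ν + 1))) * R ≤
      (9 * μ * R / 4) / ((j : ℝ) + 1) * (((j : ℝ) + 1) ^ 2 * ((j : ℝ) + 2) ^ 2) := by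
    rw [show ((j : ℝ) + 1 + 1) ^ 2 * ((j : ℝ) + 1 + 2) ^ 2 *
        (μ / (4 * ((j : ℝ) + 1) * ((j : ℝ) + ν + 1))) * R =
        ((j : ℝ) + 2) ^ 2 * ((j : ℝ) + 3) ^ 2 * μ * R /
          (4 * ((j : ℝ) + 1) * ((j : ℝ) + ν + 1)) by ring]
    rw [div_le_iff₀ hd]
    have h9 : ((j : ℝ) + 3) ^ 2 ≤ 9 * ((j : ℝ) + 1) ^ 2 := by nlinarith [Nat.cast_nonneg (α := ℝ) j]
    have hν1 : (1 : ℝ) ≤ (j : ℝ) + ν + 1 := by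
      have := Nat.cast_nonneg (α := ℝ) j; linarith
    have hj0 : (0 : ℝ) ≤ (j : ℝ) := Nat.cast_nonneg j
    rw [show (9 * μ * R / 4) / ((j : ℝ) + 1) * (((j : ℝ) + 1) ^ 2 * ((j : ℝ) + 2) ^ 2) *
        (4 * ((j : ℝ) + 1) * ((j : ℝ) + ν + 1)) =
        9 * (((j : ℝ) + 1) ^ 2 * (((j : ℝ) + 1) / ((j : ℝ) + 1))) * ((j : ℝ) + 2) ^ 2 *
          ((j : ℝ) + ν + 1) * (μ * R) by ring]
    rw [div_self (by positivity : ((j : ℝ) + 1) ≠ 0)]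
    have hμR : (0 : ℝ) ≤ μ * R := by positivity
    nlinarith [mul_le_mul_of_nonneg_right h9 hμR, sq_nonneg ((j:ℝ)+2),
      mul_nonneg (mul_nonneg (sq_nonneg ((j:ℝ)+1)) (sq_nonneg ((j:ℝ)+2))) hμR]
  refine le_trans (le_of_eq (by ring)) (le_trans
    (mul_le_mul_of_nonneg_right hcoef (by positivity :
      (0:ℝ) ≤ |a j| * R ^ j)) (le_of_eq (by ring)))


set_option maxHeartbeats 1000000 in
lemma summable_shift {a : ℕ → ℝ}
    (hdom : ∀ R : ℝ, 1 ≤ R →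
      Summable fun j : ℕ => ((j : ℝ) + 1) ^ 2 * ((j : ℝ) + 2) ^ 2 * |a j| * R ^ j)
    (σ : ℕ) (g : ℕ → ℝ)
    (hg : ∀ j : ℕ, |g j| ≤ ((j : ℝ) + 1) ^ 2 * ((j : ℝ) + 2) ^ 2 * |a (j + σ)|) (v : ℝ) :
    Summable fun j : ℕ => g j * v ^ j := by
  set R : ℝ := |v| + 1 with hRdef
  have hR1 : (1 : ℝ) ≤ R := by rw [hRdef]; linarith [abs_nonneg v]
  have hvR : |v| ≤ R := by rw [hRdef]; linarith
  have hshift : Summable fun j : ℕ =>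
      ((((j + σ) : ℕ) : ℝ) + 1) ^ 2 * ((((j + σ) : ℕ) : ℝ) + 2) ^ 2 * |a (j + σ)| * R ^ (j + σ) :=
    (summable_nat_add_iff σ).2 (hdom R hR1)
  refine Summable.of_norm_bounded hshift fun j => ?_
  push_cast
  have h1 : ‖g j * v ^ j‖ = |g j| * |v| ^ j := by rw [norm_mul, norm_pow]; rfl
  rw [h1]
  have h2 : |v| ^ j ≤ R ^ (j + σ) := by
    calc |v| ^ j ≤ R ^ j := pow_le_pow_left₀ (abs_nonneg v) hvR j
      _ ≤ R ^ (j + σ) := pow_le_pow_right₀ (by linarith) (Nat.le_add_right j σ)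
  have h3 : |g j| ≤ ((j : ℝ) + σ + 1) ^ 2 * ((j : ℝ) + σ + 2) ^ 2 * |a (j + σ)| := by
    refine le_trans (hg j) ?_
    have hj : (0:ℝ) ≤ (j:ℝ) := Nat.cast_nonneg j
    have hσ : (0:ℝ) ≤ (σ:ℝ) := Nat.cast_nonneg σ
    have b1 : ((j : ℝ) + 1) ^ 2 ≤ ((j : ℝ) + σ + 1) ^ 2 := by nlinarith
    have b2 : ((j : ℝ) + 2) ^ 2 ≤ ((j : ℝ) + σ + 2) ^ 2 := by nlinarith
    nlinarith [abs_nonneg (a (j + σ)), sq_nonneg ((j:ℝ)+1), sq_nonneg ((j:ℝ)+σ+2),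
      mul_le_mul b1 b2 (by positivity) (by positivity)]
  calc |g j| * |v| ^ j
      ≤ (((j : ℝ) + σ + 1) ^ 2 * ((j : ℝ) + σ + 2) ^ 2 * |a (j + σ)|) * R ^ (j + σ) :=
        mul_le_mul h3 h2 (by positivity) (by positivity)
    _ = ((j : ℝ) + σ + 1) ^ 2 * ((j : ℝ) + σ + 2) ^ 2 * |a (j + σ)| * R ^ (j + σ) := by ring

lemma hasDerivAt_psum {b : ℕ → ℝ}
    (hb : ∀ R : ℝ, 1 ≤ R → Summable fun j : ℕ => ((j : ℝ) + 1) * |b (j + 1)| * R ^ j) (u : ℝ) :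
    HasDerivAt (fun v : ℝ => ∑' j : ℕ, b j * v ^ j)
      (∑' j : ℕ, ((j : ℝ) + 1) * b (j + 1) * u ^ j) u := by
  set R : ℝ := |u| + 1 with hR
  have hR1 : (1 : ℝ) ≤ R := by rw [hR]; linarith [abs_nonneg u]
  have hRpos : (0 : ℝ) < R := by linarith
  set w : ℕ → ℝ := fun n => (n : ℝ) * |b n| * R ^ (n - 1) with hw
  have hwsum : Summable w := by
    refine (summable_nat_add_iff 1).1 (Summable.congr (hb R hR1) fun j => ?_)
    simp [hw]
  have hbd : ∀ (n : ℕ) (y : ℝ), y ∈ Ioo (-R) R → ‖b n * ((n : ℝ) * y ^ (n - 1))‖ ≤ w n := by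
    intro n y hy
    have hyR : |y| ≤ R := le_of_lt (abs_lt.2 ⟨hy.1, hy.2⟩)
    rw [hw]
    calc ‖b n * ((n : ℝ) * y ^ (n - 1))‖ = (n : ℝ) * |b n| * |y| ^ (n - 1) := by
          simp [abs_mul, abs_pow]; ring
      _ ≤ (n : ℝ) * |b n| * R ^ (n - 1) := by
          apply mul_le_mul_of_nonneg_left (pow_le_pow_left₀ (abs_nonneg _) hyR _) (by positivity)
  have h0 : Summable fun n : ℕ => b n * (0 : ℝ) ^ n := by
    apply summable_of_ne_finset_zero (s := {0})
    intro n hn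
    simp only [Finset.mem_singleton] at hn
    simp [zero_pow hn]
  have key := hasDerivAt_tsum_of_isPreconnected hwsum isOpen_Ioo
    (isPreconnected_Ioo) (g := fun n y => b n * y ^ n)
    (g' := fun n y => b n * ((n : ℝ) * y ^ (n - 1)))
    (fun n y _ => (hasDerivAt_pow n y).const_mul (b n)) hbd
    (y₀ := 0) (by constructor <;> simp [hRpos] <;> linarith) h0
    (y := u) (by constructor <;> [linarith [neg_abs_le u]; linarith [le_abs_self u]])
  refine key.congr_deriv ?_
  have hsum : Summable fun n : ℕ => b n * ((n : ℝ) * u ^ (n - 1)) :=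
    Summable.of_norm_bounded hwsum fun n => hbd n u
      ⟨by linarith [neg_abs_le u], by linarith [le_abs_self u]⟩
  rw [Summable.tsum_eq_zero_add hsum]
  rw [show b 0 * (((0:ℕ):ℝ) * (u:ℝ) ^ ((0:ℕ) - 1)) = 0 by simp]
  rw [zero_add]
  apply tsum_congr
  intro n
  rw [Nat.add_sub_cancel]
  push_cast
  ring



lemma alpha_series_s3 (N : ℕ) (hN : 3 ≤ N) (τ : ℝ) (hτ : 0 < τ) (μ : ℝ)
    (hμ : μ = ((N : ℝ) - 2) ^ 2 * τ ^ (-(2 / ((N : ℝ) - 2)))) (r : ℝ) (hr : 0 < r) :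
    alphaFun N (τ * r ^ (-((N : ℝ) - 2))) = ∑' j : ℕ,
      (Real.Gamma (((N : ℝ) - 2) / 2 + 1) * (-μ / 4) ^ j /
        ((j.factorial : ℝ) * Real.Gamma ((j : ℝ) + ((N : ℝ) - 2) / 2 + 1))) * (r ^ 2) ^ j := by
  have hN3 : (3 : ℝ) ≤ (N : ℝ) := by exact_mod_cast hN
  unfold alphaFun besselJ
  set ν : ℝ := ((N : ℝ) - 2) / 2 with hνdef
  have hν : 0 < ν := by rw [hνdef]; linarith
  have hN2 : ((N : ℝ) - 2) ≠ 0 := by linarith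
  have hτ' : (0 : ℝ) < τ ^ (-(1 / (2 * ν))) := Real.rpow_pos_of_pos hτ _
  have hA : (τ * r ^ (-((N : ℝ) - 2))) ^ (-(1 / (2 * ν))) = τ ^ (-(1 / (2 * ν))) * r := by
    rw [Real.mul_rpow hτ.le (Real.rpow_nonneg hr.le _), ← Real.rpow_mul hr.le]
    rw [show -((N : ℝ) - 2) * (-(1 / (2 * ν))) = 1 by rw [hνdef]; field_simp]
    rw [Real.rpow_one]
  have hB : Real.sqrt (τ * r ^ (-((N : ℝ) - 2))) = τ ^ ((1 : ℝ) / 2) * r ^ (-ν) := by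
    rw [Real.sqrt_eq_rpow, Real.mul_rpow hτ.le (Real.rpow_nonneg hr.le _),
      ← Real.rpow_mul hr.le]
    rw [show -((N : ℝ) - 2) * (1 / 2) = -ν by rw [hνdef]; ring]
  rw [hA, hB, ← tsum_mul_left]
  refine tsum_congr fun j => ?_
  rw [show 2 * ν * (τ ^ (-(1 / (2 * ν))) * r) / 2 = ν * τ ^ (-(1 / (2 * ν))) * r by ring]
  rw [Real.mul_rpow (by positivity) hr.le, Real.mul_rpow hν.le hτ'.le, ← Real.rpow_mul hτ.le]
  have hνν : ν ^ (-ν) * ν ^ (ν + 2 * (j : ℝ)) = ((ν ^ 2 : ℝ)) ^ j := by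
    rw [← Real.rpow_add hν, show -ν + (ν + 2 * (j : ℝ)) = ((2 * j : ℕ) : ℝ) by push_cast; ring,
      Real.rpow_natCast, pow_mul]
  have hττ : τ ^ ((1 : ℝ) / 2) * τ ^ (-(1 / (2 * ν)) * (ν + 2 * (j : ℝ))) =
      (τ ^ (-(1 / ν))) ^ j := by
    rw [← Real.rpow_add hτ,
      show (1 : ℝ) / 2 + -(1 / (2 * ν)) * (ν + 2 * (j : ℝ)) = -(1 / ν) * (j : ℝ) by
        field_simp; ring,
      Real.rpow_mul hτ.le, Real.rpow_natCast]
  have hrr : r ^ (-ν) * r ^ (ν + 2 * (j : ℝ)) = ((r ^ 2 : ℝ)) ^ j := by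
    rw [← Real.rpow_add hr, show -ν + (ν + 2 * (j : ℝ)) = ((2 * j : ℕ) : ℝ) by push_cast; ring,
      Real.rpow_natCast, pow_mul]
  have hμ4 : (-μ / 4 : ℝ) ^ j = (-1 : ℝ) ^ j * ((ν ^ 2 : ℝ) ^ j * (τ ^ (-(1 / ν))) ^ j) := by
    have h1 : -(2 / ((N : ℝ) - 2)) = -(1 / ν) := by rw [hνdef]; field_simp
    have h2 : (-μ / 4 : ℝ) = -1 * (ν ^ 2 * τ ^ (-(1 / ν))) := by
      rw [hμ, h1, hνdef]; ring
    rw [h2, mul_pow, mul_pow]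
  calc ν ^ (-ν) * Real.Gamma (ν + 1) * (τ ^ ((1 : ℝ) / 2) * r ^ (-ν)) *
        ((-1 : ℝ) ^ j / (Real.Gamma ((j : ℝ) + 1) * Real.Gamma ((j : ℝ) + ν + 1)) *
          (ν ^ (ν + 2 * (j : ℝ)) * τ ^ (-(1 / (2 * ν)) * (ν + 2 * (j : ℝ))) *
            r ^ (ν + 2 * (j : ℝ))))
      = (ν ^ (-ν) * ν ^ (ν + 2 * (j : ℝ))) *
        (τ ^ ((1 : ℝ) / 2) * τ ^ (-(1 / (2 * ν)) * (ν + 2 * (j : ℝ)))) *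
        (r ^ (-ν) * r ^ (ν + 2 * (j : ℝ))) *
        (Real.Gamma (ν + 1) *
          ((-1 : ℝ) ^ j / (Real.Gamma ((j : ℝ) + 1) * Real.Gamma ((j : ℝ) + ν + 1)))) := by
        ring
    _ = (ν ^ 2 : ℝ) ^ j * (τ ^ (-(1 / ν))) ^ j * (r ^ 2) ^ j *
        (Real.Gamma (ν + 1) *
          ((-1 : ℝ) ^ j / ((j.factorial : ℝ) * Real.Gamma ((j : ℝ) + ν + 1)))) := by
        rw [hνν, hττ, hrr, Real.Gamma_nat_eq_factorial]
    _ = Real.Gamma (ν + 1) * (-μ / 4) ^ j /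
          ((j.factorial : ℝ) * Real.Gamma ((j : ℝ) + ν + 1)) * (r ^ 2) ^ j := by
        rw [hμ4]; ring


set_option maxHeartbeats 2000000 in
theorem stmt3 (N : ℕ) (hN : 3 ≤ N) (τ : ℝ) (hτ : 0 < τ) (hzero : alphaFun N τ = 0)
    (φ : EuclideanSpace ℝ (Fin N) → ℝ)
    (hφ : ∀ x : EuclideanSpace ℝ (Fin N), φ x = alphaFun N (τ * ‖x‖ ^ (-((N : ℝ) - 2))))
    (μ : ℝ) (hμ : μ = ((N : ℝ) - 2) ^ 2 * τ ^ (-(2 / ((N : ℝ) - 2)))) :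
    (∀ x ∈ ball (0 : EuclideanSpace ℝ (Fin N)) 1 \ {0}, -lap φ x = μ * φ x) ∧
    (∀ x : EuclideanSpace ℝ (Fin N), ‖x‖ = 1 → φ x = 0) := by
  have hN3 : (3 : ℝ) ≤ (N : ℝ) := by exact_mod_cast hN
  set ν : ℝ := ((N : ℝ) - 2) / 2 with hνdef
  have hν : 0 < ν := by rw [hνdef]; linarith
  have hNν : (N : ℝ) = 2 * ν + 2 := by rw [hνdef]; ring
  have hμpos : 0 < μ := by
    rw [hμ]
    have h1 : (0:ℝ) < ((N : ℝ) - 2) ^ 2 := by nlinarith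
    exact mul_pos h1 (Real.rpow_pos_of_pos hτ _)
  set a : ℕ → ℝ := fun j => Real.Gamma (ν + 1) * (-μ / 4) ^ j /
    ((j.factorial : ℝ) * Real.Gamma ((j : ℝ) + ν + 1)) with hadef
  have hjpos : ∀ j : ℕ, (0:ℝ) < (j : ℝ) + ν + 1 := by
    intro j; have : (0:ℝ) ≤ (j:ℝ) := Nat.cast_nonneg j; linarith
  have hΓpos : ∀ j : ℕ, 0 < Real.Gamma ((j : ℝ) + ν + 1) :=
    fun j => Real.Gamma_pos_of_pos (hjpos j)
  have hrec : ∀ j : ℕ, 4 * ((j : ℝ) + 1) * ((j : ℝ) + ν + 1) * a (j + 1) = -μ * a j := by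
    intro j
    have hΓs : Real.Gamma (((j + 1 : ℕ) : ℝ) + ν + 1) =
        ((j : ℝ) + ν + 1) * Real.Gamma ((j : ℝ) + ν + 1) := by
      rw [show (((j + 1 : ℕ) : ℝ) + ν + 1) = ((j : ℝ) + ν + 1) + 1 by push_cast; ring]
      exact Real.Gamma_add_one (ne_of_gt (hjpos j))
    have hfs : (((j + 1).factorial : ℕ) : ℝ) = ((j : ℝ) + 1) * (j.factorial : ℝ) := by
      rw [Nat.factorial_succ]; push_cast; ring
    rw [hadef]
    simp only []
    rw [hΓs, hfs, pow_succ]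
    have h1 : Real.Gamma ((j : ℝ) + ν + 1) ≠ 0 := ne_of_gt (hΓpos j)
    have h2 : ((j.factorial : ℕ) : ℝ) ≠ 0 := by exact_mod_cast Nat.factorial_ne_zero j
    have h3 : ((j : ℝ) + 1) ≠ 0 := by positivity
    have h4 : ((j : ℝ) + ν + 1) ≠ 0 := ne_of_gt (hjpos j)
    field_simp
  have habs : ∀ j : ℕ, |a (j + 1)| = μ / (4 * ((j : ℝ) + 1) * ((j : ℝ) + ν + 1)) * |a j| := by
    intro j
    have hd : (0:ℝ) < 4 * ((j : ℝ) + 1) * ((j : ℝ) + ν + 1) := by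
      have := hjpos j
      have h0 : (0:ℝ) ≤ (j:ℝ) := Nat.cast_nonneg j
      nlinarith
    have h1 : a (j + 1) = -μ * a j / (4 * ((j : ℝ) + 1) * ((j : ℝ) + ν + 1)) := by
      rw [eq_div_iff (ne_of_gt hd)]
      linear_combination hrec j
    rw [h1, abs_div, abs_mul, abs_neg, abs_of_pos hμpos, abs_of_pos hd]
    ring
  have hdom : ∀ R : ℝ, 1 ≤ R →
      Summable fun j : ℕ => ((j : ℝ) + 1) ^ 2 * ((j : ℝ) + 2) ^ 2 * |a j| * R ^ j :=
    sdom_summable hν hμpos habs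
  set G : ℝ → ℝ := fun v => ∑' j : ℕ, a j * v ^ j with hGdef
  set G₁ : ℝ → ℝ := fun v => ∑' j : ℕ, ((j : ℝ) + 1) * a (j + 1) * v ^ j with hG₁def
  set G₂ : ℝ → ℝ := fun v => ∑' j : ℕ,
    ((j : ℝ) + 1) * ((j : ℝ) + 2) * a (j + 2) * v ^ j with hG₂def
  have hb_a : ∀ R : ℝ, 1 ≤ R →
      Summable fun j : ℕ => ((j : ℝ) + 1) * |a (j + 1)| * R ^ j := by
    intro R hR
    have := summable_shift hdom 1 (fun j => ((j : ℝ) + 1) * |a (j + 1)|)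
      (fun j => by
        show abs (((j : ℝ) + 1) * |a (j + 1)|) ≤ ((j : ℝ) + 1) ^ 2 * ((j : ℝ) + 2) ^ 2 * |a (j + 1)|
        have h0 : (0:ℝ) ≤ (j:ℝ) := Nat.cast_nonneg j
        rw [abs_mul, abs_abs, abs_of_nonneg (show (0:ℝ) ≤ (j:ℝ) + 1 by positivity)]
        have hc : ((j:ℝ) + 1) ≤ ((j:ℝ)+1)^2*((j:ℝ)+2)^2 := by nlinarith
        exact mul_le_mul_of_nonneg_right hc (abs_nonneg _)) R
    exact this
  have hG : ∀ v : ℝ, HasDerivAt G (G₁ v) v := fun v => hasDerivAt_psum hb_a v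
  have hb_b : ∀ R : ℝ, 1 ≤ R → Summable fun j : ℕ =>
      ((j : ℝ) + 1) * |(((j + 1 : ℕ) : ℝ) + 1) * a (j + 1 + 1)| * R ^ j := by
    intro R hR
    have := summable_shift hdom 2
      (fun j => ((j : ℝ) + 1) * |(((j + 1 : ℕ) : ℝ) + 1) * a (j + 1 + 1)|)
      (fun j => by
        show abs (((j : ℝ) + 1) * |(((j + 1 : ℕ) : ℝ) + 1) * a (j + 1 + 1)|)
          ≤ ((j : ℝ) + 1) ^ 2 * ((j : ℝ) + 2) ^ 2 * |a (j + 2)|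
        have h0 : (0:ℝ) ≤ (j:ℝ) := Nat.cast_nonneg j
        rw [abs_mul, abs_abs, abs_of_nonneg (show (0:ℝ) ≤ (j:ℝ) + 1 by positivity), abs_mul,
          abs_of_nonneg (show (0:ℝ) ≤ (((j + 1 : ℕ) : ℝ) + 1) by positivity),
          show j + 1 + 1 = j + 2 from rfl]
        push_cast
        have hc : ((j:ℝ) + 1) * (((j:ℝ) + 1 + 1)) ≤ ((j:ℝ)+1)^2*((j:ℝ)+2)^2 := by nlinarith
        nlinarith [mul_le_mul_of_nonneg_right hc (abs_nonneg (a (j + 2)))]) R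
    exact this
  have hG₁ : ∀ v : ℝ, HasDerivAt G₁ (G₂ v) v := by
    intro v
    have h := hasDerivAt_psum (b := fun j => ((j : ℝ) + 1) * a (j + 1)) hb_b v
    convert h using 1
    rw [hG₂def]
    refine tsum_congr fun j => ?_
    push_cast
    ring
  have SA : ∀ v : ℝ, Summable fun j : ℕ => a j * v ^ j := by
    intro v
    refine summable_shift hdom 0 a (fun j => ?_) v
    show |a j| ≤ ((j : ℝ) + 1) ^ 2 * ((j : ℝ) + 2) ^ 2 * |a (j + 0)|
    rw [Nat.add_zero]
    have h0 : (0:ℝ) ≤ (j:ℝ) := Nat.cast_nonneg j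
    have hc : (1:ℝ) ≤ ((j:ℝ)+1)^2*((j:ℝ)+2)^2 := by nlinarith
    nlinarith [mul_le_mul_of_nonneg_right hc (abs_nonneg (a j))]
  have SB : ∀ v : ℝ, Summable fun j : ℕ => ((j : ℝ) + 1) * a (j + 1) * v ^ j := by
    intro v
    refine summable_shift hdom 1 (fun j => ((j : ℝ) + 1) * a (j + 1)) (fun j => ?_) v
    show |((j : ℝ) + 1) * a (j + 1)| ≤ ((j : ℝ) + 1) ^ 2 * ((j : ℝ) + 2) ^ 2 * |a (j + 1)|
    have h0 : (0:ℝ) ≤ (j:ℝ) := Nat.cast_nonneg j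
    rw [abs_mul, abs_of_nonneg (show (0:ℝ) ≤ (j:ℝ) + 1 by positivity)]
    have hc : ((j:ℝ) + 1) ≤ ((j:ℝ)+1)^2*((j:ℝ)+2)^2 := by nlinarith
    exact mul_le_mul_of_nonneg_right hc (abs_nonneg _)
  have SC : ∀ v : ℝ, Summable fun j : ℕ => 4 * ((j : ℝ) + 1) * (j : ℝ) * a (j + 1) * v ^ j := by
    intro v
    refine summable_shift hdom 1 (fun j => 4 * ((j : ℝ) + 1) * (j : ℝ) * a (j + 1))
      (fun j => ?_) v
    show |4 * ((j : ℝ) + 1) * (j : ℝ) * a (j + 1)|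
      ≤ ((j : ℝ) + 1) ^ 2 * ((j : ℝ) + 2) ^ 2 * |a (j + 1)|
    have h0 : (0:ℝ) ≤ (j:ℝ) := Nat.cast_nonneg j
    rw [abs_mul, abs_of_nonneg (show (0:ℝ) ≤ 4 * ((j:ℝ) + 1) * (j:ℝ) by positivity)]
    have hc : 4 * ((j:ℝ) + 1) * (j:ℝ) ≤ ((j:ℝ)+1)^2*((j:ℝ)+2)^2 := by nlinarith [h0, mul_nonneg h0 h0, mul_nonneg (mul_nonneg h0 h0) h0, mul_nonneg (mul_nonneg (mul_nonneg h0 h0) h0) h0]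
    exact mul_le_mul_of_nonneg_right hc (abs_nonneg _)
  have hODE : ∀ v : ℝ, μ * G v + 2 * (N : ℝ) * G₁ v + 4 * v * G₂ v = 0 := by
    intro v
    have hstep1 : 4 * v * G₂ v = ∑' j : ℕ, 4 * ((j : ℝ) + 1) * (j : ℝ) * a (j + 1) * v ^ j := by
      rw [Summable.tsum_eq_zero_add (SC v)]
      rw [show 4 * (((0:ℕ) : ℝ) + 1) * ((0:ℕ) : ℝ) * a (0 + 1) * v ^ (0:ℕ) = 0 by norm_num]
      rw [zero_add, hG₂def]
      simp only []
      rw [show 4 * v * ∑' j : ℕ, ((j : ℝ) + 1) * ((j : ℝ) + 2) * a (j + 2) * v ^ j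
          = ∑' j : ℕ, 4 * v * (((j : ℝ) + 1) * ((j : ℝ) + 2) * a (j + 2) * v ^ j) from
        (tsum_mul_left).symm]
      refine tsum_congr fun j => ?_
      push_cast
      rw [show j + 1 + 1 = j + 2 from rfl]
      ring
    have hμG : μ * G v = ∑' j : ℕ, μ * (a j * v ^ j) := by
      rw [hGdef]; exact (tsum_mul_left).symm
    have hNG : 2 * (N : ℝ) * G₁ v
        = ∑' j : ℕ, 2 * (N : ℝ) * (((j : ℝ) + 1) * a (j + 1) * v ^ j) := by
      rw [hG₁def]; exact (tsum_mul_left).symm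
    rw [hstep1, hμG, hNG]
    rw [← Summable.tsum_add ((SA v).mul_left μ) ((SB v).mul_left (2 * (N : ℝ)))]
    rw [← Summable.tsum_add (((SA v).mul_left μ).add ((SB v).mul_left (2 * (N : ℝ)))) (SC v)]
    have hz : ∀ j : ℕ, μ * (a j * v ^ j) + 2 * (N : ℝ) * (((j : ℝ) + 1) * a (j + 1) * v ^ j)
        + 4 * ((j : ℝ) + 1) * (j : ℝ) * a (j + 1) * v ^ j = 0 := by
      intro j
      have h := hrec j
      rw [hNν]
      linear_combination v ^ j * h
    rw [tsum_congr hz, tsum_zero]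
  have key : ∀ y : EuclideanSpace ℝ (Fin N), y ≠ 0 → φ y = G (‖y‖ ^ 2) := by
    intro y hy
    rw [hφ y, alpha_series_s3 N hN τ hτ μ hμ ‖y‖ (norm_pos_iff.2 hy), hGdef]
  have boundary : ∀ x : EuclideanSpace ℝ (Fin N), ‖x‖ = 1 → φ x = 0 := by
    intro x hx
    rw [hφ x, hx, Real.one_rpow, mul_one, hzero]
  refine ⟨?_, boundary⟩
  rintro x ⟨-, hx0⟩
  have hx : x ≠ 0 := fun h => hx0 (by simp [h])
  have hxn : (0:ℝ) < ‖x‖ := norm_pos_iff.2 hx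
  have hlap : lap φ x = 4 * ‖x‖ ^ 2 * G₂ (‖x‖ ^ 2) + 2 * (N : ℝ) * G₁ (‖x‖ ^ 2) := by
    have hterm : ∀ i : Fin N,
        iteratedDeriv 2 (fun s : ℝ => φ (x + s • EuclideanSpace.single i 1)) 0
          = 4 * (x i) ^ 2 * G₂ (‖x‖ ^ 2) + 2 * G₁ (‖x‖ ^ 2) := by
      intro i
      have hq : ∀ s : ℝ, ‖x + s • EuclideanSpace.single i (1:ℝ)‖ ^ 2
          = ‖x‖ ^ 2 + 2 * x i * s + s ^ 2 := by
        intro s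
        rw [norm_add_sq_real, real_inner_smul_right, norm_smul, EuclideanSpace.norm_single]
        have hin : (inner ℝ x (EuclideanSpace.single i (1:ℝ)) : ℝ) = x i := by
          rw [EuclideanSpace.inner_single_right]; simp
        rw [hin]
        simp [Real.norm_eq_abs, sq_abs]
        ring
      have hqd : ∀ s : ℝ, HasDerivAt (fun s : ℝ => ‖x‖ ^ 2 + 2 * x i * s + s ^ 2)
          (2 * x i + 2 * s) s := by
        intro s
        have h1 : HasDerivAt (fun s : ℝ => 2 * x i * s) (2 * x i) s := by
          simpa using (hasDerivAt_id s).const_mul (2 * x i)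
        have h2 : HasDerivAt (fun s : ℝ => s ^ 2) (2 * s) s := by
          simpa using hasDerivAt_pow 2 s
        exact ((h1.const_add (‖x‖ ^ 2)).add h2)
      have hline : ∀ᶠ s in 𝓝 (0:ℝ), x + s • EuclideanSpace.single i (1:ℝ) ≠ 0 := by
        have hc : Continuous fun s : ℝ => x + s • EuclideanSpace.single i (1:ℝ) :=
          continuous_const.add (continuous_id.smul continuous_const)
        exact hc.continuousAt.eventually_ne (by simpa using hx)
      have hfeq : (fun s : ℝ => φ (x + s • EuclideanSpace.single i 1))
          =ᶠ[𝓝 (0:ℝ)] fun s : ℝ => G (‖x‖ ^ 2 + 2 * x i * s + s ^ 2) := by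
        filter_upwards [hline] with s hs
        rw [key _ hs, hq s]
      have hcomp : ∀ s : ℝ, HasDerivAt (fun s : ℝ => G (‖x‖ ^ 2 + 2 * x i * s + s ^ 2))
          (G₁ (‖x‖ ^ 2 + 2 * x i * s + s ^ 2) * (2 * x i + 2 * s)) s := by
        intro s
        exact (hG _).comp s (hqd s)
      have hDeq : deriv (fun s : ℝ => φ (x + s • EuclideanSpace.single i 1))
          =ᶠ[𝓝 (0:ℝ)] fun s : ℝ => G₁ (‖x‖ ^ 2 + 2 * x i * s + s ^ 2) * (2 * x i + 2 * s) := by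
        refine (hfeq.deriv).trans ?_
        exact Filter.Eventually.of_forall fun s => (hcomp s).deriv
      have hD : HasDerivAt
          (fun s : ℝ => G₁ (‖x‖ ^ 2 + 2 * x i * s + s ^ 2) * (2 * x i + 2 * s))
          ((G₂ (‖x‖ ^ 2 + 2 * x i * 0 + 0 ^ 2) * (2 * x i + 2 * 0)) * (2 * x i + 2 * 0)
            + G₁ (‖x‖ ^ 2 + 2 * x i * 0 + 0 ^ 2) * 2) 0 := by
        have hc1 : HasDerivAt (fun s : ℝ => G₁ (‖x‖ ^ 2 + 2 * x i * s + s ^ 2))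
            (G₂ (‖x‖ ^ 2 + 2 * x i * 0 + 0 ^ 2) * (2 * x i + 2 * 0)) 0 :=
          (hG₁ _).comp 0 (hqd 0)
        have hc2 : HasDerivAt (fun s : ℝ => 2 * x i + 2 * s) 2 0 := by
          simpa using ((hasDerivAt_id (0:ℝ)).const_mul 2).const_add (2 * x i)
        exact hc1.mul hc2
      have h21 : ∀ f : ℝ → ℝ, iteratedDeriv 2 f = deriv (deriv f) := by
        intro f
        rw [show (2:ℕ) = 1 + 1 from rfl, iteratedDeriv_succ, iteratedDeriv_one]
      rw [h21, hDeq.deriv_eq, hD.deriv]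
      norm_num
      ring
    unfold lap
    rw [Finset.sum_congr rfl fun i _ => hterm i]
    have hsq : ∑ i : Fin N, (x i) ^ 2 = ‖x‖ ^ 2 := by
      rw [EuclideanSpace.norm_eq, Real.sq_sqrt (by positivity)]
      refine Finset.sum_congr rfl fun i _ => ?_
      rw [Real.norm_eq_abs, sq_abs]
    rw [Finset.sum_add_distrib, Finset.sum_const, Finset.card_univ, Fintype.card_fin,
      nsmul_eq_mul]
    rw [show ∑ i : Fin N, 4 * (x i) ^ 2 * G₂ (‖x‖ ^ 2)
        = (∑ i : Fin N, (x i) ^ 2) * (4 * G₂ (‖x‖ ^ 2)) by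
      rw [Finset.sum_mul]; exact Finset.sum_congr rfl fun i _ => by ring]
    rw [hsq]
    ring
  rw [neg_eq_iff_eq_neg, hlap, key x hx]
  have := hODE (‖x‖ ^ 2)
  linarith
end

section
/- Let $N = 6$ and fix $\gamma \in \mathbb{R}$. Suppose $y_1, y_2 : (0,\infty) \to \mathbb{R}$ are two bounded $C^2$ solutions of $y'' + t^{-5/2}(y + y|y|) = 0$ on $(0,\infty)$ with $y_i(t) \to \gamma$ as $t \to +\infty$ for $i = 1,2$. Then $y_1 = y_2$. -/
open Real Set Filter

section aux
open MeasureTheory intervalIntegral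

lemma lipsf (u v : ℝ) : |(u + u*|u|) - (v + v*|v|)| ≤ (1 + |u| + |v|) * |u - v| := by
  have h2 : abs (u * abs u - v * abs v) ≤ |u - v| * |u| + |v| * |u - v| := by
    have h1 : u * abs u - v * abs v = (u - v) * |u| + v * (|u| - |v|) := by ring
    rw [h1]
    refine (abs_add_le _ _).trans ?_
    rw [abs_mul, abs_mul, abs_abs]
    have h5 := abs_abs_sub_abs_le_abs_sub u v
    nlinarith [abs_nonneg v, abs_nonneg (u-v)]
  have h3 : |(u + u*|u|) - (v + v*|v|)| ≤ |u - v| + abs (u * abs u - v * abs v) := by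
    have h4 : (u + u*|u|) - (v + v*|v|) = (u - v) + (u * abs u - v * abs v) := by ring
    rw [h4]; exact abs_add_le _ _
  nlinarith [abs_nonneg (u-v), abs_nonneg u, abs_nonneg v]

lemma key (L : ℝ) (hL : 1 ≤ L) (a a' a'' : ℝ → ℝ)
    (ha : ∀ t ∈ Ioi (0:ℝ), HasDerivAt a (a' t) t)
    (ha' : ∀ t ∈ Ioi (0:ℝ), HasDerivAt a' (a'' t) t)
    (hcont : ContinuousOn a'' (Ioi 0))
    (hbound : ∀ t ∈ Ioi (0:ℝ), |a'' t| ≤ L * t ^ (-(5/2:ℝ)) * |a t|)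
    (hbdd : ∀ t ∈ Ioi (0:ℝ), |a t| ≤ L)
    (hlim : Tendsto a atTop (nhds 0)) :
    ∀ t ∈ Ioi (0:ℝ), a t = 0 := by
  have hL0 : (0:ℝ) < L := lt_of_lt_of_le one_pos hL
  set T : ℝ := max 1 (9 * L ^ 2) with hTdef
  have hT1 : (1:ℝ) ≤ T := le_max_left _ _
  have hT0 : (0:ℝ) < T := lt_of_lt_of_le one_pos hT1
  have hTL : 3 * L ≤ T ^ (1/2:ℝ) := by
    have h9 : (9 * L ^ 2 : ℝ) ^ (1/2:ℝ) ≤ T ^ (1/2:ℝ) :=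
      Real.rpow_le_rpow (by positivity) (le_max_right _ _) (by norm_num)
    have : (9 * L ^ 2 : ℝ) ^ (1/2:ℝ) = 3 * L := by
      rw [← Real.sqrt_eq_rpow, show (9 * L^2 : ℝ) = (3*L)^2 by ring]
      exact Real.sqrt_sq (by positivity)
    linarith
  -- smallness
  have hsmall : ∀ t : ℝ, T ≤ t → (4/3) * L * t ^ (-(1/2:ℝ)) ≤ 4/9 := by
    intro t ht
    have ht0 : (0:ℝ) < t := lt_of_lt_of_le hT0 ht
    have h1 : 3 * L ≤ t ^ (1/2:ℝ) :=
      hTL.trans (Real.rpow_le_rpow hT0.le ht (by norm_num))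
    rw [Real.rpow_neg ht0.le]
    have hp : (0:ℝ) < t ^ (1/2:ℝ) := by positivity
    rw [mul_inv_le_iff₀ hp]
    nlinarith
  have hIci : Ici T ⊆ Ioi (0:ℝ) := fun s hs => lt_of_lt_of_le hT0 hs
  have conta : ContinuousOn a (Ioi 0) := fun t ht => (ha t ht).continuousAt.continuousWithinAt
  have conta' : ContinuousOn a' (Ioi 0) := fun t ht => (ha' t ht).continuousAt.continuousWithinAt
  set M : ℝ := sSup ((fun t => |a t|) '' Ici T) with hMdef
  have hMbdd : BddAbove ((fun t => |a t|) '' Ici T) := by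
    refine ⟨L, ?_⟩; rintro x ⟨t, ht, rfl⟩; exact hbdd t (hIci ht)
  have hle : ∀ t, T ≤ t → |a t| ≤ M := fun t ht => le_csSup hMbdd ⟨t, ht, rfl⟩
  have hM0 : (0:ℝ) ≤ M := le_trans (abs_nonneg _) (hle T le_rfl)
  have int2 : ∀ t, T ≤ t → IntegrableOn a'' (Ioi t) := by
    intro t ht
    have ht0 : (0:ℝ) < t := lt_of_lt_of_le hT0 ht
    have hg : IntegrableOn (fun s : ℝ => (L*M) * s ^ (-(5/2:ℝ))) (Ioi t) :=
      (integrableOn_Ioi_rpow_of_lt (by norm_num) ht0).const_mul _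
    refine Integrable.mono' hg ?_ ?_
    · exact ((hcont.mono (fun s hs => lt_trans ht0 hs)).aestronglyMeasurable measurableSet_Ioi)
    · filter_upwards [ae_restrict_mem measurableSet_Ioi] with s hs
      have hs0 : (0:ℝ) < s := lt_trans ht0 hs
      have h1 := hbound s hs0
      have h2 : |a s| ≤ M := hle s (le_trans ht (le_of_lt hs))
      have h3 : (0:ℝ) ≤ s ^ (-(5/2:ℝ)) := Real.rpow_nonneg hs0.le _
      rw [Real.norm_eq_abs]
      have h4 : L * s ^ (-(5/2:ℝ)) * |a s| ≤ L * M * s ^ (-(5/2:ℝ)) := by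
        nlinarith [mul_nonneg hL0.le h3]
      linarith
  have ftc2 : ∀ t, T ≤ t → ∀ b, t ≤ b → (∫ s in t..b, a'' s) = a' b - a' t := by
    intro t ht b hb
    have ht0 : (0:ℝ) < t := lt_of_lt_of_le hT0 ht
    have hsub : uIcc t b ⊆ Ioi (0:ℝ) := by
      rw [uIcc_of_le hb]; exact fun s hs => lt_of_lt_of_le ht0 hs.1
    exact intervalIntegral.integral_eq_sub_of_hasDerivAt (fun s hs => ha' s (hsub hs))
      ((hcont.mono hsub).intervalIntegrable)
  have tendA' : ∀ t, T ≤ t → Tendsto a' atTop (nhds (a' t + ∫ s in Ioi t, a'' s)) := by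
    intro t ht
    have h := intervalIntegral_tendsto_integral_Ioi t (int2 t ht) tendsto_id
    have h2 : Tendsto (fun b => a' t + ∫ s in t..b, a'' s) atTop
        (nhds (a' t + ∫ s in Ioi t, a'' s)) := tendsto_const_nhds.add h
    refine h2.congr' ?_
    filter_upwards [eventually_ge_atTop t] with b hb
    rw [ftc2 t ht b hb]; ring
  have hzero : ∀ c : ℝ, Tendsto a' atTop (nhds c) → c = 0 := by
    intro c hc
    have h1 : Tendsto (fun t => a (t+1) - a t) atTop (nhds 0) := by
      have := (hlim.comp (tendsto_atTop_add_const_right atTop 1 tendsto_id)).sub hlim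
      simpa using this
    have h2 : Tendsto (fun t => a (t+1) - a t) atTop (nhds c) := by
      rw [Metric.tendsto_atTop]
      intro ε hε
      obtain ⟨N₁, hN₁⟩ := (Metric.tendsto_atTop.mp hc) (ε/2) (by linarith)
      refine ⟨max N₁ 1, fun n hn => ?_⟩
      have hn1 : N₁ ≤ n := le_trans (le_max_left _ _) hn
      have hn0 : (0:ℝ) < n := lt_of_lt_of_le one_pos (le_trans (le_max_right _ _) hn)
      have hd : ∀ x ∈ Icc n (n+1), HasDerivWithinAt (fun y => a y - c*y) (a' x - c)
          (Icc n (n+1)) x := by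
        intro x hx
        have hx0 : x ∈ Ioi (0:ℝ) := lt_of_lt_of_le hn0 hx.1
        have := (ha x hx0).sub (by simpa using (hasDerivAt_id x).const_mul c)
        exact this.hasDerivWithinAt
      have hbnd : ∀ x ∈ Icc n (n+1), ‖a' x - c‖ ≤ ε/2 := by
        intro x hx
        have := hN₁ x (le_trans hn1 hx.1)
        rw [Real.dist_eq] at this
        rw [Real.norm_eq_abs]
        linarith
      have := Convex.norm_image_sub_le_of_norm_hasDerivWithin_le hd hbnd (convex_Icc _ _)
        (⟨le_refl n, by linarith⟩ : n ∈ Icc n (n+1)) ⟨by linarith, le_refl (n+1)⟩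
      rw [Real.dist_eq]
      have he : ‖(n+1) - n‖ = 1 := by rw [Real.norm_eq_abs]; norm_num
      rw [he, mul_one] at this
      have hrw : (a (n+1) - c*(n+1)) - (a n - c*n) = (a (n+1) - a n) - c := by ring
      rw [Real.norm_eq_abs, hrw] at this
      linarith
    exact tendsto_nhds_unique h2 h1
  have key1 : ∀ t, T ≤ t → a' t = - ∫ s in Ioi t, a'' s := by
    intro t ht
    have := hzero _ (tendA' t ht)
    linarith
  have bound1 : ∀ t, T ≤ t → |a' t| ≤ 2/3 * (L * M) * t ^ (-(3/2:ℝ)) := by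
    intro t ht
    have ht0 : (0:ℝ) < t := lt_of_lt_of_le hT0 ht
    have hg : IntegrableOn (fun s : ℝ => (L*M) * s ^ (-(5/2:ℝ))) (Ioi t) :=
      (integrableOn_Ioi_rpow_of_lt (by norm_num) ht0).const_mul _
    rw [key1 t ht, abs_neg]
    calc |∫ s in Ioi t, a'' s| ≤ ∫ s in Ioi t, |a'' s| := by
          simpa [Real.norm_eq_abs] using
            norm_integral_le_integral_norm (μ := volume.restrict (Ioi t)) a''
      _ ≤ ∫ s in Ioi t, (L*M) * s ^ (-(5/2:ℝ)) := by
          refine setIntegral_mono_on ((int2 t ht).abs) hg measurableSet_Ioi ?_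
          intro s hs
          have hs0 : (0:ℝ) < s := lt_trans ht0 hs
          have h1 := hbound s hs0
          have h2 : |a s| ≤ M := hle s (le_trans ht (le_of_lt hs))
          have h3 : (0:ℝ) ≤ s ^ (-(5/2:ℝ)) := Real.rpow_nonneg hs0.le _
          nlinarith [mul_nonneg hL0.le h3]
      _ = 2/3 * (L*M) * t ^ (-(3/2:ℝ)) := by
          rw [MeasureTheory.integral_const_mul, integral_Ioi_rpow_of_lt (by norm_num) ht0]
          norm_num
          ring
  have int1 : ∀ t, T ≤ t → IntegrableOn a' (Ioi t) := by
    intro t ht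
    have ht0 : (0:ℝ) < t := lt_of_lt_of_le hT0 ht
    have hg : IntegrableOn (fun s : ℝ => 2/3 * (L*M) * s ^ (-(3/2:ℝ))) (Ioi t) :=
      (integrableOn_Ioi_rpow_of_lt (by norm_num) ht0).const_mul _
    refine Integrable.mono' hg ?_ ?_
    · exact ((conta'.mono (fun s hs => lt_trans ht0 hs)).aestronglyMeasurable measurableSet_Ioi)
    · filter_upwards [ae_restrict_mem measurableSet_Ioi] with s hs
      rw [Real.norm_eq_abs]
      exact bound1 s (le_trans ht (le_of_lt hs))
  have ftc1 : ∀ t, T ≤ t → ∀ b, t ≤ b → (∫ s in t..b, a' s) = a b - a t := by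
    intro t ht b hb
    have ht0 : (0:ℝ) < t := lt_of_lt_of_le hT0 ht
    have hsub : uIcc t b ⊆ Ioi (0:ℝ) := by
      rw [uIcc_of_le hb]; exact fun s hs => lt_of_lt_of_le ht0 hs.1
    exact intervalIntegral.integral_eq_sub_of_hasDerivAt (fun s hs => ha s (hsub hs))
      ((conta'.mono hsub).intervalIntegrable)
  have key0 : ∀ t, T ≤ t → a t = - ∫ s in Ioi t, a' s := by
    intro t ht
    have h := intervalIntegral_tendsto_integral_Ioi t (int1 t ht) tendsto_id
    have h2 : Tendsto a atTop (nhds (a t + ∫ s in Ioi t, a' s)) := by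
      refine (tendsto_const_nhds.add h).congr' ?_
      filter_upwards [eventually_ge_atTop t] with b hb
      simp only [id_eq]
      rw [ftc1 t ht b hb]; ring
    have := tendsto_nhds_unique h2 hlim
    linarith
  have boundA : ∀ t, T ≤ t → |a t| ≤ 4/9 * M := by
    intro t ht
    have ht0 : (0:ℝ) < t := lt_of_lt_of_le hT0 ht
    have hg : IntegrableOn (fun s : ℝ => 2/3 * (L*M) * s ^ (-(3/2:ℝ))) (Ioi t) :=
      (integrableOn_Ioi_rpow_of_lt (by norm_num) ht0).const_mul _
    have h1 : |a t| ≤ 4/3 * (L*M) * t ^ (-(1/2:ℝ)) := by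
      rw [key0 t ht, abs_neg]
      calc |∫ s in Ioi t, a' s| ≤ ∫ s in Ioi t, |a' s| := by
            simpa [Real.norm_eq_abs] using
              norm_integral_le_integral_norm (μ := volume.restrict (Ioi t)) a'
        _ ≤ ∫ s in Ioi t, 2/3 * (L*M) * s ^ (-(3/2:ℝ)) := by
            refine setIntegral_mono_on ((int1 t ht).abs) hg measurableSet_Ioi ?_
            intro s hs
            exact bound1 s (le_trans ht (le_of_lt hs))
        _ = 4/3 * (L*M) * t ^ (-(1/2:ℝ)) := by
            rw [MeasureTheory.integral_const_mul, integral_Ioi_rpow_of_lt (by norm_num) ht0]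
            norm_num
            ring
    have h2 := hsmall t ht
    have h3 : (0:ℝ) ≤ t ^ (-(1/2:ℝ)) := Real.rpow_nonneg ht0.le _
    nlinarith
  have hMneg : M ≤ 4/9 * M := by
    refine csSup_le ⟨|a T|, ⟨T, self_mem_Ici, rfl⟩⟩ ?_
    rintro x ⟨t, ht, rfl⟩
    exact boundA t ht
  have hM00 : M ≤ 0 := by linarith
  have htail : ∀ t, T ≤ t → a t = 0 := by
    intro t ht
    exact abs_eq_zero.mp (le_antisymm (le_trans (hle t ht) hM00) (abs_nonneg _))
  set T₀ : ℝ := T + 1 with hT₀def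
  have hT₀0 : (0:ℝ) < T₀ := by linarith
  have haT₀ : a T₀ = 0 := htail T₀ (by linarith)
  have ha'T₀ : a' T₀ = 0 := by
    have hev : (fun _ : ℝ => (0:ℝ)) =ᶠ[nhds T₀] a := by
      filter_upwards [isOpen_Ioi.mem_nhds (show T < T₀ by linarith)] with s hs
      exact (htail s (le_of_lt hs)).symm
    have h1 : HasDerivAt (fun _ : ℝ => (0:ℝ)) (a' T₀) T₀ :=
      (ha T₀ hT₀0).congr_of_eventuallyEq hev
    simpa using h1.unique (hasDerivAt_const _ _)
  intro t₀ ht₀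
  rcases le_or_gt T t₀ with hc | hc
  · exact htail t₀ hc
  have ht₀T : t₀ ≤ T₀ := by linarith
  have ht₀0 : (0:ℝ) < t₀ := ht₀
  set K : ℝ := max 1 (L * t₀ ^ (-(5/2:ℝ))) with hKdef
  set F : ℝ → ℝ × ℝ := fun s => (a (t₀ + T₀ - s), a' (t₀ + T₀ - s)) with hFdef
  set F' : ℝ → ℝ × ℝ := fun s => (-(a' (t₀ + T₀ - s)), -(a'' (t₀ + T₀ - s))) with hF'def
  have hσ : ∀ s ∈ Icc t₀ T₀, t₀ + T₀ - s ∈ Icc t₀ T₀ := by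
    intro s hs; exact ⟨by linarith [hs.2], by linarith [hs.1]⟩
  have hFd : ∀ s ∈ Icc t₀ T₀, HasDerivAt F (F' s) s := by
    intro s hs
    have hmem : t₀ + T₀ - s ∈ Ioi (0:ℝ) := lt_of_lt_of_le ht₀0 (hσ s hs).1
    have hσd : HasDerivAt (fun s : ℝ => t₀ + T₀ - s) (-1) s := by
      simpa using (hasDerivAt_id s).const_sub (t₀ + T₀)
    have h1 : HasDerivAt (fun s : ℝ => a (t₀ + T₀ - s)) (-(a' (t₀ + T₀ - s))) s := by
      have := (ha _ hmem).comp s hσd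
      rw [mul_neg_one] at this; exact this
    have h2 : HasDerivAt (fun s : ℝ => a' (t₀ + T₀ - s)) (-(a'' (t₀ + T₀ - s))) s := by
      have := (ha' _ hmem).comp s hσd
      rw [mul_neg_one] at this; exact this
    exact h1.prodMk h2
  have hFc : ContinuousOn F (Icc t₀ T₀) := fun s hs => (hFd s hs).continuousAt.continuousWithinAt
  have hFa : ‖F t₀‖ ≤ 0 := by
    have hF0 : F t₀ = (0, 0) := by
      simp only [hFdef]
      rw [show t₀ + T₀ - t₀ = T₀ by ring, haT₀, ha'T₀]
    rw [hF0]; simp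
  have hK1 : (1:ℝ) ≤ K := le_max_left _ _
  have hbd : ∀ s ∈ Ico t₀ T₀, ‖F' s‖ ≤ K * ‖F s‖ + 0 := by
    intro s hs
    have hsIcc : s ∈ Icc t₀ T₀ := Ico_subset_Icc_self hs
    set u := t₀ + T₀ - s with hu
    have hu1 : t₀ ≤ u := (hσ s hsIcc).1
    have hu0 : (0:ℝ) < u := lt_of_lt_of_le ht₀0 hu1
    have hnF : ‖F s‖ = max |a u| |a' u| := by
      simp [hFdef, Prod.norm_def, Real.norm_eq_abs, ← hu]
    have hnF' : ‖F' s‖ = max |a' u| |a'' u| := by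
      simp [hF'def, Prod.norm_def, Real.norm_eq_abs, abs_neg, ← hu]
    rw [hnF, hnF', add_zero]
    have hFnn : (0:ℝ) ≤ max |a u| |a' u| := le_max_of_le_left (abs_nonneg _)
    have hA := abs_nonneg (a u)
    have h5 : (0:ℝ) ≤ K := le_trans zero_le_one hK1
    refine max_le ?_ ?_
    · calc |a' u| ≤ max |a u| |a' u| := le_max_right _ _
        _ ≤ K * max |a u| |a' u| := le_mul_of_one_le_left hFnn hK1
    · have h2 : u ^ (-(5/2:ℝ)) ≤ t₀ ^ (-(5/2:ℝ)) :=
        Real.rpow_le_rpow_of_nonpos ht₀0 hu1 (by norm_num)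
      have s1 : L * u ^ (-(5/2:ℝ)) ≤ L * t₀ ^ (-(5/2:ℝ)) :=
        mul_le_mul_of_nonneg_left h2 hL0.le
      calc |a'' u| ≤ L * u ^ (-(5/2:ℝ)) * |a u| := hbound u hu0
        _ ≤ (L * t₀ ^ (-(5/2:ℝ))) * |a u| := mul_le_mul_of_nonneg_right s1 hA
        _ ≤ K * |a u| := mul_le_mul_of_nonneg_right (le_max_right _ _) hA
        _ ≤ K * max |a u| |a' u| := mul_le_mul_of_nonneg_left (le_max_left _ _) h5
  have hgr := norm_le_gronwallBound_of_norm_deriv_right_le hFc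
    (fun x hx => (hFd x (Ico_subset_Icc_self hx)).hasDerivWithinAt) hFa hbd
  have hend := hgr T₀ ⟨ht₀T, le_refl T₀⟩
  rw [gronwallBound_ε0_δ0] at hend
  have hFT : ‖F T₀‖ = max |a t₀| |a' t₀| := by
    simp [hFdef, Prod.norm_def, Real.norm_eq_abs, show t₀ + T₀ - T₀ = t₀ by ring]
  rw [hFT] at hend
  have hfin : |a t₀| ≤ 0 := le_trans (le_max_left _ _) hend
  exact abs_eq_zero.mp (le_antisymm hfin (abs_nonneg _))

end aux

theorem stmt10 (γ : ℝ) (y₁ y₂ : ℝ → ℝ)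
    (h₁ : ContDiffOn ℝ 2 y₁ (Set.Ioi 0)) (h₂ : ContDiffOn ℝ 2 y₂ (Set.Ioi 0))
    (hb₁ : ∃ C : ℝ, ∀ t ∈ Set.Ioi (0 : ℝ), |y₁ t| ≤ C)
    (hb₂ : ∃ C : ℝ, ∀ t ∈ Set.Ioi (0 : ℝ), |y₂ t| ≤ C)
    (hode₁ : ∀ t ∈ Set.Ioi (0 : ℝ),
      deriv (deriv y₁) t + t ^ (-(5 / 2 : ℝ)) * (y₁ t + y₁ t * |y₁ t|) = 0)
    (hode₂ : ∀ t ∈ Set.Ioi (0 : ℝ),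
      deriv (deriv y₂) t + t ^ (-(5 / 2 : ℝ)) * (y₂ t + y₂ t * |y₂ t|) = 0)
    (hlim₁ : Tendsto y₁ atTop (nhds γ)) (hlim₂ : Tendsto y₂ atTop (nhds γ)) :
    Set.EqOn y₁ y₂ (Set.Ioi 0) := by
  obtain ⟨C₁, hC₁⟩ := hb₁
  obtain ⟨C₂, hC₂⟩ := hb₂
  set L : ℝ := 1 + max C₁ 0 + max C₂ 0 with hLdef
  have hL : (1:ℝ) ≤ L := by
    have := le_max_right C₁ (0:ℝ); have := le_max_right C₂ (0:ℝ); simp only [hLdef]; linarith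
  have hy₁d : ∀ t ∈ Ioi (0:ℝ), HasDerivAt y₁ (deriv y₁ t) t := fun t ht =>
    ((h₁.differentiableOn (by norm_num) t ht).differentiableAt
      (isOpen_Ioi.mem_nhds ht)).hasDerivAt
  have hy₂d : ∀ t ∈ Ioi (0:ℝ), HasDerivAt y₂ (deriv y₂ t) t := fun t ht =>
    ((h₂.differentiableOn (by norm_num) t ht).differentiableAt
      (isOpen_Ioi.mem_nhds ht)).hasDerivAt
  have hd₁ : ContDiffOn ℝ 1 (deriv y₁) (Ioi 0) := h₁.deriv_of_isOpen isOpen_Ioi (by norm_num)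
  have hd₂ : ContDiffOn ℝ 1 (deriv y₂) (Ioi 0) := h₂.deriv_of_isOpen isOpen_Ioi (by norm_num)
  have hy₁d2 : ∀ t ∈ Ioi (0:ℝ), HasDerivAt (deriv y₁) (deriv (deriv y₁) t) t := fun t ht =>
    ((hd₁.differentiableOn (by norm_num) t ht).differentiableAt (isOpen_Ioi.mem_nhds ht)).hasDerivAt
  have hy₂d2 : ∀ t ∈ Ioi (0:ℝ), HasDerivAt (deriv y₂) (deriv (deriv y₂) t) t := fun t ht =>
    ((hd₂.differentiableOn (by norm_num) t ht).differentiableAt (isOpen_Ioi.mem_nhds ht)).hasDerivAt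
  set a : ℝ → ℝ := fun t => y₁ t - y₂ t with hadef
  set a' : ℝ → ℝ := fun t => deriv y₁ t - deriv y₂ t with ha'def
  set a'' : ℝ → ℝ := fun t => deriv (deriv y₁) t - deriv (deriv y₂) t with ha''def
  have ha : ∀ t ∈ Ioi (0:ℝ), HasDerivAt a (a' t) t := fun t ht =>
    (hy₁d t ht).sub (hy₂d t ht)
  have ha' : ∀ t ∈ Ioi (0:ℝ), HasDerivAt a' (a'' t) t := fun t ht =>
    (hy₁d2 t ht).sub (hy₂d2 t ht)
  have hode : ∀ t ∈ Ioi (0:ℝ), a'' t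
      = -(t ^ (-(5/2:ℝ)) * ((y₁ t + y₁ t * |y₁ t|) - (y₂ t + y₂ t * |y₂ t|))) := by
    intro t ht
    have e1 := hode₁ t ht
    have e2 := hode₂ t ht
    simp only [ha''def]
    linear_combination e1 - e2
  have hbound : ∀ t ∈ Ioi (0:ℝ), |a'' t| ≤ L * t ^ (-(5/2:ℝ)) * |a t| := by
    intro t ht
    have ht0 : (0:ℝ) < t := ht
    have h3 : (0:ℝ) ≤ t ^ (-(5/2:ℝ)) := Real.rpow_nonneg ht0.le _
    have hlip := lipsf (y₁ t) (y₂ t)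
    have hLc : 1 + |y₁ t| + |y₂ t| ≤ L := by
      have := hC₁ t ht; have := hC₂ t ht
      have := le_max_left C₁ (0:ℝ); have := le_max_left C₂ (0:ℝ)
      simp only [hLdef]; linarith
    rw [hode t ht, abs_neg, abs_mul, abs_of_nonneg h3]
    calc t ^ (-(5/2:ℝ)) * |(y₁ t + y₁ t * |y₁ t|) - (y₂ t + y₂ t * |y₂ t|)|
        ≤ t ^ (-(5/2:ℝ)) * ((1 + |y₁ t| + |y₂ t|) * |y₁ t - y₂ t|) :=
          mul_le_mul_of_nonneg_left hlip h3
      _ ≤ t ^ (-(5/2:ℝ)) * (L * |y₁ t - y₂ t|) :=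
          mul_le_mul_of_nonneg_left
            (mul_le_mul_of_nonneg_right hLc (abs_nonneg _)) h3
      _ = L * t ^ (-(5/2:ℝ)) * |a t| := by simp only [hadef]; ring
  have hbdd : ∀ t ∈ Ioi (0:ℝ), |a t| ≤ L := by
    intro t ht
    have h1 := hC₁ t ht; have h2 := hC₂ t ht
    have := le_max_left C₁ (0:ℝ); have := le_max_left C₂ (0:ℝ)
    have habs : |a t| ≤ |y₁ t| + |y₂ t| := abs_sub _ _
    simp only [hLdef]; linarith
  have hcont : ContinuousOn a'' (Ioi 0) := by
    have hrpow : ContinuousOn (fun t : ℝ => t ^ (-(5/2:ℝ))) (Ioi 0) :=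
      ContinuousOn.rpow_const continuousOn_id (fun t ht => Or.inl (ne_of_gt ht))
    have hy₁c : ContinuousOn y₁ (Ioi 0) := h₁.continuousOn
    have hy₂c : ContinuousOn y₂ (Ioi 0) := h₂.continuousOn
    have hfc : ContinuousOn
        (fun t => -(t ^ (-(5/2:ℝ)) * ((y₁ t + y₁ t * |y₁ t|) - (y₂ t + y₂ t * |y₂ t|))))
        (Ioi 0) :=
      (hrpow.mul (((hy₁c.add (hy₁c.mul hy₁c.abs)).sub
        (hy₂c.add (hy₂c.mul hy₂c.abs))))).neg
    exact ContinuousOn.congr hfc (fun t ht => hode t ht)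
  have hlim0 : Tendsto a atTop (nhds 0) := by
    have := hlim₁.sub hlim₂
    simpa using this
  have hkey := key L hL a a' a'' ha ha' hcont hbound hbdd hlim0
  intro t ht
  have := hkey t ht
  simp only [hadef] at this
  linarith
end
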